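/- arXiv:1012.5353 — 3 statements merged into one kernel-verified Lean document; each statement's English description precedes it below -/
import Mathlib

section
/- Every 2-dimensional smooth Fano polytope has at most 6 vertices. -/
/-- Real vector associated to an integer lattice vector. -/
def toR3 (v : Fin 2 → ℤ) : Fin 2 → ℝ := fun i => (v i : ℝ)

/-- A point of `ℝ²` is a lattice point when all its coordinates are integers. -/
def IsLatticePoint3 (x : Fin 2 → ℝ) : Prop := ∀ i, ∃ z : ℤ, x i = (z : ℝ)

/-- The dual polytope `{y : ⟨x,y⟩ ≥ -1 for all x ∈ A}`. -/
def dualPolytope3 (A : Set (Fin 2 → ℝ)) : Set (Fin 2 → ℝ) :=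
  {y | ∀ x ∈ A, -1 ≤ ∑ i, x i * y i}

/-- Two integer vectors form a `ℤ`-basis of `ℤ²`. -/
def IsZBasis3 (u v : Fin 2 → ℤ) : Prop :=
  LinearIndependent ℤ ![u, v] ∧ Submodule.span ℤ {u, v} = ⊤

/-!
Sort the vertices `v k` by angle. Each edge gives `det (v k) (v (k + 1)) = 1`, hence
`v (k - 1) + v (k + 1) = a k • v k` for integers `a k`, and convexity at the vertex `v k` forces
`a k ≤ 1`. Such cyclic sequences satisfy Noether's formula `∑ a k = 3 n - 12`, by induction on
the number `n` of vertices: if some `a k = 1`, deleting `v k` gives a sequence of the same kind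
whose sum is smaller by `3`; if all `a k ≤ 0`, then `v (k - 1)` and `v (k + 1)` are at least `π`
apart for every `k`, which forces `n ≤ 4`, and the cases `n = 3, 4` are checked by hand. Hence
`3 n - 12 ≤ n`.
-/

open Real Finset Function

section Det2

variable {R : Type*} [CommRing R]

def det2 (x y : Fin 2 → R) : R := x 0 * y 1 - x 1 * y 0

@[simp] lemma det2_self (x : Fin 2 → R) : det2 x x = 0 := by
  unfold det2; ring

lemma det2_swap (x y : Fin 2 → R) : det2 y x = -det2 x y := by
  unfold det2; ring

lemma det2_add_left (x y z : Fin 2 → R) : det2 (x + y) z = det2 x z + det2 y z := by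
  simp only [det2, Pi.add_apply]; ring

lemma det2_sub_left (x y z : Fin 2 → R) : det2 (x - y) z = det2 x z - det2 y z := by
  simp only [det2, Pi.sub_apply]; ring

lemma det2_sub_right (x y z : Fin 2 → R) : det2 x (y - z) = det2 x y - det2 x z := by
  simp only [det2, Pi.sub_apply]; ring

lemma det2_smul_left (a : R) (x y : Fin 2 → R) : det2 (a • x) y = a * det2 x y := by
  simp only [det2, Pi.smul_apply, smul_eq_mul]; ring

lemma det2_add_smul_add_smul (a b c d : R) (x y : Fin 2 → R) :
    det2 (a • x + b • y) (c • x + d • y) = (a * d - b * c) * det2 x y := by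
  simp only [det2, Pi.add_apply, Pi.smul_apply, smul_eq_mul]; ring

lemma det2_smul_eq (x y z : Fin 2 → R) : det2 x y • z = det2 z y • x + det2 x z • y := by
  ext i
  fin_cases i <;>
    simp only [det2, Fin.zero_eta, Fin.mk_one, Fin.isValue, Pi.smul_apply, smul_eq_mul,
      Pi.add_apply] <;>
    ring

lemma add_eq_det2_smul {x y z : Fin 2 → R} (hxy : det2 x y = 1) (hyz : det2 y z = 1) :
    x + z = det2 x z • y := by
  have h := det2_smul_eq y z x
  rw [hyz, one_smul, det2_swap x y, hxy] at h
  linear_combination (norm := module) h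

end Det2

lemma det2_toR3 (x y : Fin 2 → ℤ) : ((det2 x y : ℤ) : ℝ) = det2 (toR3 x) (toR3 y) := by
  simp [det2, toR3]

lemma toR3_add (x y : Fin 2 → ℤ) : toR3 (x + y) = toR3 x + toR3 y := by
  ext i; simp [toR3]

lemma toR3_smul (a : ℤ) (x : Fin 2 → ℤ) : toR3 (a • x) = (a : ℝ) • toR3 x := by
  ext i; simp [toR3]

lemma toR3_injective : Function.Injective toR3 := fun x y h =>
  funext fun i => by simpa [toR3] using congrFun h i

lemma det2_dvd_one_of_span_eq_top {x y : Fin 2 → ℤ} (h : Submodule.span ℤ {x, y} = ⊤) :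
    det2 x y ∣ 1 := by
  have h₀ : (![1, 0] : Fin 2 → ℤ) ∈ Submodule.span ℤ {x, y} := h ▸ Submodule.mem_top
  have h₁ : (![0, 1] : Fin 2 → ℤ) ∈ Submodule.span ℤ {x, y} := h ▸ Submodule.mem_top
  obtain ⟨a, b, hab⟩ := Submodule.mem_span_pair.mp h₀
  obtain ⟨c, d, hcd⟩ := Submodule.mem_span_pair.mp h₁
  refine ⟨a * d - b * c, ?_⟩
  have := det2_add_smul_add_smul a b c d x y
  rw [hab, hcd] at this
  simpa [det2, mul_comm] using this

def HasPolarAngle (x : Fin 2 → ℝ) (θ : ℝ) : Prop :=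
  ∃ r > 0, x 0 = r * cos θ ∧ x 1 = r * sin θ

namespace HasPolarAngle

variable {x y : Fin 2 → ℝ} {α β : ℝ}

lemma ne_zero (h : HasPolarAngle x α) : x ≠ 0 := by
  obtain ⟨r, hr, h₀, h₁⟩ := h
  intro hx
  have : r ^ 2 * (cos α ^ 2 + sin α ^ 2) = 0 := by
    simp only [hx, Pi.zero_apply] at h₀ h₁
    linear_combination (-(r * cos α)) * h₀ - r * sin α * h₁
  rw [cos_sq_add_sin_sq, mul_one] at this
  exact (pow_pos hr 2).ne' this

lemma det2_eq (hx : HasPolarAngle x α) (hy : HasPolarAngle y β) :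
    ∃ ρ > 0, det2 x y = ρ * sin (β - α) := by
  obtain ⟨r, hr, hx₀, hx₁⟩ := hx
  obtain ⟨s, hs, hy₀, hy₁⟩ := hy
  exact ⟨r * s, by positivity, by rw [det2, hx₀, hx₁, hy₀, hy₁, sin_sub]; ring⟩

lemma add_int_mul_two_pi (h : HasPolarAngle x α) (k : ℤ) :
    HasPolarAngle x (α + k * (2 * π)) := by
  simpa only [HasPolarAngle, cos_add_int_mul_two_pi, sin_add_int_mul_two_pi] using h

lemma exists_pos_smul_eq (hx : HasPolarAngle x α) (hy : HasPolarAngle y α) :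
    ∃ r : ℝ, 0 < r ∧ y = r • x := by
  obtain ⟨r, hr, hx₀, hx₁⟩ := hx
  obtain ⟨s, hs, hy₀, hy₁⟩ := hy
  refine ⟨s / r, by positivity, funext fun i => ?_⟩
  fin_cases i <;>
    simp only [Fin.zero_eta, Fin.mk_one, Fin.isValue, Pi.smul_apply, smul_eq_mul, hx₀, hx₁, hy₀,
      hy₁] <;>
    field_simp

end HasPolarAngle

lemma hasPolarAngle_arg {x : Fin 2 → ℝ} (hx : x ≠ 0) :
    HasPolarAngle x (Complex.arg ⟨x 0, x 1⟩) := by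
  have hz : (⟨x 0, x 1⟩ : ℂ) ≠ 0 := fun h => hx <| funext fun i => by
    fin_cases i
    · exact congrArg Complex.re h
    · exact congrArg Complex.im h
  exact ⟨_, norm_pos_iff.mpr hz, (Complex.norm_mul_cos_arg (⟨x 0, x 1⟩ : ℂ)).symm,
    (Complex.norm_mul_sin_arg (⟨x 0, x 1⟩ : ℂ)).symm⟩

lemma Function.Periodic.map_emod {α : Type*} {f : ℤ → α} {n : ℤ} (h : Periodic f n) (m : ℤ) :
    f (m % n) = f m := by
  conv_rhs => rw [← Int.emod_add_mul_ediv m n, mul_comm]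
  exact ((h.int_mul (m / n)) _).symm

lemma Function.Periodic.sum_range_comp_add {M : Type*} [AddCommGroup M] {f : ℤ → M} {n : ℕ}
    (h : Periodic f n) (c : ℤ) : ∑ k ∈ range n, f (k + c) = ∑ k ∈ range n, f k := by
  have hstep : Periodic (fun c : ℤ => ∑ k ∈ range n, f (k + c)) 1 := fun c => by
    have h₁ := sum_range_succ (fun k : ℕ => f (k + c)) n
    rw [sum_range_succ', add_comm (n : ℤ), h] at h₁
    simpa [add_assoc, add_comm (1 : ℤ)] using h₁
  simpa using hstep.int_mul_eq c

structure IsAngularSeq (n : ℕ) (u : ℤ → Fin 2 → ℤ) (θ : ℤ → ℝ) : Prop where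
  periodic : Periodic u n
  strictMono : StrictMono θ
  add_period : ∀ m, θ (m + n) = θ m + 2 * π
  hasPolarAngle : ∀ m, HasPolarAngle (toR3 (u m)) (θ m)

namespace IsAngularSeq

variable {n : ℕ} {u : ℤ → Fin 2 → ℤ} {θ : ℤ → ℝ} {i j : ℤ}

lemma sub_lt_two_pi (h : IsAngularSeq n u θ) (hji : j < i + n) : θ j - θ i < 2 * π := by
  have := h.strictMono hji
  rw [h.add_period] at this
  linarith

lemma det2_eq_mul_sin (h : IsAngularSeq n u θ) (i j : ℤ) :
    ∃ ρ > 0, det2 (toR3 (u i)) (toR3 (u j)) = ρ * sin (θ j - θ i) :=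
  (h.hasPolarAngle i).det2_eq (h.hasPolarAngle j)

lemma pi_le_of_det2_nonpos (h : IsAngularSeq n u θ) (hij : i < j)
    (hdet : det2 (toR3 (u i)) (toR3 (u j)) ≤ 0) : π ≤ θ j - θ i := by
  obtain ⟨ρ, hρ, hd⟩ := h.det2_eq_mul_sin i j
  by_contra! hlt
  have := mul_pos hρ (sin_pos_of_pos_of_lt_pi (sub_pos.mpr (h.strictMono hij)) hlt)
  linarith

lemma le_pi_of_det2_nonneg (h : IsAngularSeq n u θ) (hji : j < i + n)
    (hdet : 0 ≤ det2 (toR3 (u i)) (toR3 (u j))) : θ j - θ i ≤ π := by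
  obtain ⟨ρ, hρ, hd⟩ := h.det2_eq_mul_sin i j
  by_contra! hlt
  have hsin := sin_pos_of_pos_of_lt_pi (sub_pos.mpr hlt) (by linarith [h.sub_lt_two_pi hji])
  rw [sin_sub_pi] at hsin
  nlinarith

lemma det2_nonneg_of_le_pi (h : IsAngularSeq n u θ) (hij : i ≤ j) (hle : θ j - θ i ≤ π) :
    0 ≤ det2 (toR3 (u i)) (toR3 (u j)) := by
  obtain ⟨ρ, hρ, hd⟩ := h.det2_eq_mul_sin i j
  rw [hd]
  exact mul_nonneg hρ.le
    (sin_nonneg_of_nonneg_of_le_pi (sub_nonneg.mpr (h.strictMono.monotone hij)) hle)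

lemma det2_pos_of_lt_pi (h : IsAngularSeq n u θ) (hij : i < j) (hlt : θ j - θ i < π) :
    0 < det2 (toR3 (u i)) (toR3 (u j)) := by
  obtain ⟨ρ, hρ, hd⟩ := h.det2_eq_mul_sin i j
  rw [hd]
  exact mul_pos hρ (sin_pos_of_pos_of_lt_pi (sub_pos.mpr (h.strictMono hij)) hlt)

end IsAngularSeq

/-- `-fanCoeff u k` is the self-intersection number of the `k`-th torus-invariant curve of the
toric surface whose fan has rays `u`. -/
def fanCoeff (u : ℤ → Fin 2 → ℤ) (k : ℤ) : ℤ := det2 (u (k - 1)) (u (k + 1))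

section FanCoeff

variable {u : ℤ → Fin 2 → ℤ}

lemma add_eq_fanCoeff_smul (hdet : ∀ m, det2 (u m) (u (m + 1)) = 1) (k : ℤ) :
    u (k - 1) + u (k + 1) = fanCoeff u k • u k :=
  add_eq_det2_smul (by simpa using hdet (k - 1)) (hdet k)

lemma fanCoeff_comp_add (u : ℤ → Fin 2 → ℤ) (c k : ℤ) :
    fanCoeff (fun m => u (m + c)) k = fanCoeff u (k + c) := by
  simp only [fanCoeff, sub_add_eq_add_sub, add_right_comm k]

lemma fanCoeff_periodic {c : ℤ} (h : Periodic u c) : Periodic (fanCoeff u) c := fun k => by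
  rw [fanCoeff, fanCoeff, show k + c - 1 = k - 1 + c by ring, add_right_comm, h, h]

lemma fanCoeff_eq_neg_one_of_periodic_three (hper : Periodic u 3)
    (hdet : ∀ m, det2 (u m) (u (m + 1)) = 1) (k : ℤ) : fanCoeff u k = -1 := by
  have hzx : det2 (u (k + 1)) (u (k - 1)) = 1 := by
    simpa [show k + 1 + 1 = k - 1 + 3 by ring, hper _] using hdet (k + 1)
  have hyx : det2 (u k) (u (k - 1)) = -1 := by
    rw [det2_swap, show u k = u (k - 1 + 1) by simp, hdet]
  have := congrArg (det2 · (u (k - 1))) (add_eq_fanCoeff_smul hdet k)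
  simp only [det2_add_left, det2_self, det2_smul_left, hzx, hyx] at this
  linarith

lemma sum_fanCoeff_of_periodic_four (hper : Periodic u 4) :
    ∑ k ∈ range 4, fanCoeff u k = 0 := by
  have h₁ : u (-1) = u 3 := by simpa using (hper (-1)).symm
  have h₂ : u 4 = u 0 := by simpa using hper 0
  simp only [sum_range_succ, range_zero, sum_empty, fanCoeff]
  norm_num [h₁, h₂, det2_swap (u 0) (u 2), det2_swap (u 1) (u 3)]

end FanCoeff

lemma IsAngularSeq.le_four_of_fanCoeff_nonpos {n : ℕ} {u : ℤ → Fin 2 → ℤ} {θ : ℤ → ℝ}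
    (h : IsAngularSeq n u θ) (hnonpos : ∀ k, fanCoeff u k ≤ 0) : n ≤ 4 := by
  by_contra! hn
  have hpi : ∀ k : ℤ, π ≤ θ (k + 1) - θ (k - 1) := fun k =>
    h.pi_le_of_det2_nonpos (by omega) (by rw [← det2_toR3]; exact_mod_cast hnonpos k)
  have hturn₁ : ∑ k ∈ range n, (θ (k + 1) - θ k) = 2 * π := by
    have := sum_range_sub (fun k : ℕ => θ k) n
    push_cast at this
    rw [this, ← zero_add (n : ℤ), h.add_period]
    ring
  have hturn₂ : ∑ k ∈ range n, (θ k - θ (k - 1)) = 2 * π := by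
    have := sum_range_sub (fun k : ℕ => θ (k - 1)) n
    push_cast at this
    simp only [add_sub_cancel_right] at this
    rw [this, sub_eq_neg_add (n : ℤ), h.add_period]
    ring
  have := card_nsmul_le_sum (range n) _ π fun k _ => hpi k
  have hsplit : ∑ k ∈ range n, (θ (k + 1) - θ (k - 1)) =
      ∑ k ∈ range n, (θ (k + 1) - θ k) + ∑ k ∈ range n, (θ k - θ (k - 1)) := by
    rw [← sum_add_distrib]
    simp only [sub_add_sub_cancel]
  rw [card_range, nsmul_eq_mul, hsplit, hturn₁, hturn₂] at this
  have : (4 : ℝ) < n := by exact_mod_cast hn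
  nlinarith [pi_pos]

/-- The rays of a smooth complete toric Fano surface, in counterclockwise order and repeated
periodically. -/
structure IsFanoSeq (n : ℕ) (u : ℤ → Fin 2 → ℤ) (θ : ℤ → ℝ) : Prop
    extends IsAngularSeq n u θ where
  det2_succ : ∀ m, det2 (u m) (u (m + 1)) = 1
  fanCoeff_le_one : ∀ k, fanCoeff u k ≤ 1

lemma IsFanoSeq.comp_add {n : ℕ} {u : ℤ → Fin 2 → ℤ} {θ : ℤ → ℝ} (h : IsFanoSeq n u θ)
    (c : ℤ) : IsFanoSeq n (fun m => u (m + c)) (fun m => θ (m + c)) where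
  periodic m := by simp only [add_right_comm m, h.periodic _]
  strictMono a b hab := h.strictMono (by linarith)
  add_period m := by simp only [add_right_comm m, h.add_period]
  hasPolarAngle m := h.hasPolarAngle (m + c)
  det2_succ m := by simpa only [add_right_comm m] using h.det2_succ (m + c)
  fanCoeff_le_one k := by rw [fanCoeff_comp_add]; exact h.fanCoeff_le_one _

/-- Reindexing that skips the residue class of `0` modulo `n + 1`: it maps `[0, n)` onto
`[1, n]`. -/
def blowDownIdx (n : ℕ) (m : ℤ) : ℤ := m + 1 + m / n

section BlowDownIdx

variable {n : ℕ} {m : ℤ}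

lemma blowDownIdx_of_mem (hm : 0 ≤ m) (hmn : m < n) : blowDownIdx n m = m + 1 := by
  simp [blowDownIdx, Int.ediv_eq_zero_of_lt hm hmn]

lemma blowDownIdx_neg_one (hn : 0 < n) : blowDownIdx n (-1) = -1 := by
  simp [blowDownIdx, Int.neg_one_ediv, Int.sign_natCast_of_ne_zero hn.ne']

lemma blowDownIdx_self (hn : 0 < n) : blowDownIdx n n = n + 2 := by
  rw [blowDownIdx, Int.ediv_self (by exact_mod_cast hn.ne')]
  ring

lemma blowDownIdx_add_period (hn : 0 < n) (m : ℤ) :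
    blowDownIdx n (m + n) = blowDownIdx n m + (n + 1 : ℕ) := by
  simp only [blowDownIdx, Int.add_ediv_of_dvd_right (dvd_refl (n : ℤ)),
    Int.ediv_self (by exact_mod_cast hn.ne' : (n : ℤ) ≠ 0)]
  push_cast; ring

lemma strictMono_blowDownIdx (hn : 0 < n) : StrictMono (blowDownIdx n) :=
  strictMono_int_of_lt_succ fun m => by
    have := Int.ediv_le_ediv (c := n) (by exact_mod_cast hn) (Int.le_add_one (le_refl m))
    simp only [blowDownIdx]
    omega

end BlowDownIdx

section BlowDown

variable {n : ℕ} {u : ℤ → Fin 2 → ℤ}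
  (hper : Periodic u (n + 1 : ℕ)) (hdet : ∀ m, det2 (u m) (u (m + 1)) = 1)
  (h0 : fanCoeff u 0 = 1)

include hdet h0 in
lemma apply_neg_one_of_fanCoeff_zero_eq_one : u (-1) = u 0 - u 1 := by
  have := add_eq_fanCoeff_smul hdet 0
  rw [h0, one_smul, zero_sub, zero_add] at this
  exact eq_sub_of_add_eq this

include hper hdet h0 in
lemma apply_add_two_of_fanCoeff_zero_eq_one : u (n + 2) = u (n + 1) - u n := by
  have h₁ : u (n + 2) = u 1 := by rw [← hper 1]; push_cast; ring_nf
  have h₂ : u (n + 1) = u 0 := by simpa using hper 0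
  have h₃ : u n = u (-1) := by simpa using hper (-1)
  rw [h₁, h₂, h₃, apply_neg_one_of_fanCoeff_zero_eq_one hdet h0]
  abel

include hper in
lemma periodic_comp_blowDownIdx (hn : 0 < n) : Periodic (u ∘ blowDownIdx n) n := fun m => by
  simp only [comp, blowDownIdx_add_period hn, hper _]

include hdet h0 in
lemma fanCoeff_blowDown_zero (hn : 2 ≤ n) :
    fanCoeff (u ∘ blowDownIdx n) 0 = fanCoeff u 1 - 1 := by
  simp only [fanCoeff, comp, zero_sub, zero_add, blowDownIdx_neg_one (by omega : 0 < n),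
    blowDownIdx_of_mem zero_le_one (by omega : (1 : ℤ) < n)]
  rw [apply_neg_one_of_fanCoeff_zero_eq_one hdet h0, det2_sub_left, hdet 1]
  norm_num

lemma fanCoeff_blowDown_of_mem {k : ℤ} (hk : 1 ≤ k) (hkn : k + 1 < n) :
    fanCoeff (u ∘ blowDownIdx n) k = fanCoeff u (k + 1) := by
  simp only [fanCoeff, comp, blowDownIdx_of_mem (by omega : 0 ≤ k - 1) (by omega : k - 1 < n),
    blowDownIdx_of_mem (by omega : 0 ≤ k + 1) hkn]
  ring_nf

include hper hdet h0 in
lemma fanCoeff_blowDown_last (hn : 2 ≤ n) :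
    fanCoeff (u ∘ blowDownIdx n) (n - 1) = fanCoeff u n - 1 := by
  simp only [fanCoeff, comp, sub_add_cancel, blowDownIdx_self (by omega : 0 < n),
    blowDownIdx_of_mem (by omega : (0 : ℤ) ≤ n - 1 - 1) (by omega : (n : ℤ) - 1 - 1 < n)]
  have hdet' := hdet (n - 1)
  rw [sub_add_cancel] at hdet'
  rw [apply_add_two_of_fanCoeff_zero_eq_one hper hdet h0, det2_sub_right, hdet']

include hper hdet h0 in
lemma det2_blowDown_succ (hn : 2 ≤ n) (m : ℤ) :
    det2 ((u ∘ blowDownIdx n) m) ((u ∘ blowDownIdx n) (m + 1)) = 1 := by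
  have hn₀ : (0 : ℤ) < n := by omega
  have hv := periodic_comp_blowDownIdx hper (by omega)
  have hperiodic : Periodic (fun m => det2 ((u ∘ blowDownIdx n) m) ((u ∘ blowDownIdx n) (m + 1)))
      n := fun m => by dsimp only; rw [add_right_comm m (n : ℤ) 1, hv, hv]
  rw [← hperiodic.map_emod]
  have h₁ := Int.emod_nonneg m hn₀.ne'
  have h₂ := Int.emod_lt_of_pos m hn₀
  simp only [comp, blowDownIdx_of_mem h₁ h₂]
  rcases lt_or_eq_of_le (show m % n + 1 ≤ n by omega) with hlt | heq
  · rw [blowDownIdx_of_mem (by omega) hlt, hdet]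
  · rw [heq, blowDownIdx_self (by omega), apply_add_two_of_fanCoeff_zero_eq_one hper hdet h0,
      det2_sub_right, hdet, det2_self, sub_zero]

include hper hdet h0 in
lemma fanCoeff_blowDown_le (hle : ∀ k, fanCoeff u k ≤ 1) (hn : 2 ≤ n) (k : ℤ) :
    fanCoeff (u ∘ blowDownIdx n) k ≤ 1 := by
  have hn₀ : (0 : ℤ) < n := by omega
  rw [← (fanCoeff_periodic (periodic_comp_blowDownIdx hper (by omega))).map_emod]
  have h₁ := Int.emod_nonneg k hn₀.ne'
  have h₂ := Int.emod_lt_of_pos k hn₀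
  obtain h | h | h : k % n = 0 ∨ k % n = n - 1 ∨ 1 ≤ k % n ∧ k % n + 1 < n := by omega
  · rw [h, fanCoeff_blowDown_zero hdet h0 hn]; linarith [hle 1]
  · rw [h, fanCoeff_blowDown_last hper hdet h0 hn]; linarith [hle n]
  · rw [fanCoeff_blowDown_of_mem h.1 h.2]; exact hle _

include hper hdet h0 in
lemma sum_fanCoeff_blowDown (hn : 2 ≤ n) :
    ∑ k ∈ range n, fanCoeff (u ∘ blowDownIdx n) k + 3 = ∑ k ∈ range (n + 1), fanCoeff u k := by
  obtain ⟨m, rfl⟩ : ∃ m, n = m + 2 := ⟨n - 2, by omega⟩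
  have hlast := fanCoeff_blowDown_last hper hdet h0 hn
  push_cast at hlast
  rw [show (m : ℤ) + 2 - 1 = m + 1 by ring] at hlast
  have hmid : ∀ k ∈ range m, fanCoeff (u ∘ blowDownIdx (m + 2)) ((k : ℤ) + 1) =
      fanCoeff u ((k : ℤ) + 1 + 1) := fun k hk => by
    rw [fanCoeff_blowDown_of_mem (by omega) (by simp at hk; omega)]
  rw [sum_range_succ, sum_range_succ', sum_range_succ' _ (m + 2), sum_range_succ,
    sum_range_succ']
  push_cast
  rw [sum_congr rfl hmid, fanCoeff_blowDown_zero hdet h0 hn, hlast, h0, add_assoc (m : ℤ) 1 1,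
    one_add_one_eq_two]
  ring

end BlowDown

namespace IsFanoSeq

variable {n : ℕ} {u : ℤ → Fin 2 → ℤ} {θ : ℤ → ℝ}

lemma blowDown (h : IsFanoSeq (n + 1) u θ) (hn : 2 ≤ n) (h0 : fanCoeff u 0 = 1) :
    IsFanoSeq n (u ∘ blowDownIdx n) (θ ∘ blowDownIdx n) where
  periodic := periodic_comp_blowDownIdx h.periodic (by omega)
  strictMono := h.strictMono.comp (strictMono_blowDownIdx (by omega))
  add_period m := by
    simp only [comp, blowDownIdx_add_period (by omega : 0 < n), h.add_period]
  hasPolarAngle m := h.hasPolarAngle _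
  det2_succ := det2_blowDown_succ h.periodic h.det2_succ h0 hn
  fanCoeff_le_one := fanCoeff_blowDown_le h.periodic h.det2_succ h0 h.fanCoeff_le_one hn

/-- Noether's formula for smooth toric Fano surfaces. -/
theorem sum_fanCoeff (h : IsFanoSeq n u θ) (hn : 3 ≤ n) :
    ∑ k ∈ range n, fanCoeff u k = 3 * n - 12 := by
  induction n, hn using Nat.le_induction generalizing u θ with
  | base =>
    simp [fanCoeff_eq_neg_one_of_periodic_three h.periodic h.det2_succ]
  | succ n hn ih =>
    by_cases hex : ∃ k, fanCoeff u k = 1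
    · obtain ⟨k, hk⟩ := hex
      have h0 : fanCoeff (fun m => u (m + k)) 0 = 1 := by rw [fanCoeff_comp_add, zero_add, hk]
      rw [← (fanCoeff_periodic h.periodic).sum_range_comp_add k]
      simp_rw [← fanCoeff_comp_add]
      rw [← sum_fanCoeff_blowDown (h.comp_add k).periodic (h.comp_add k).det2_succ h0 (by omega),
        ih ((h.comp_add k).blowDown (by omega) h0)]
      push_cast; ring
    · have : n + 1 ≤ 4 := h.le_four_of_fanCoeff_nonpos fun k =>
        Int.lt_add_one_iff.mp (lt_of_le_of_ne (h.fanCoeff_le_one k) fun hk => hex ⟨k, hk⟩)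
      obtain rfl : n = 3 := by omega
      simpa using sum_fanCoeff_of_periodic_four h.periodic

end IsFanoSeq

section Convex

variable {E : Type*} [NormedAddCommGroup E] [NormedSpace ℝ E]

lemma ContinuousLinearMap.eq_zero_of_nonneg_of_mem_interior {f : E →L[ℝ] ℝ} {s : Set E}
    (h0 : (0 : E) ∈ interior s) (hf : ∀ x ∈ s, 0 ≤ f x) : f = 0 := by
  have : IsLocalMin f 0 := Filter.mem_of_superset (mem_interior_iff_mem_nhds.mp h0)
    fun x hx => by simpa using hf x hx
  exact this.hasFDerivAt_eq_zero f.hasFDerivAt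

def IsPositivelyExposed (S : Set E) : Prop :=
  ∀ s ∈ S, ∃ f : E →L[ℝ] ℝ, 0 < f s ∧ ∀ t ∈ S, t ≠ s → f t < f s

lemma isPositivelyExposed_of_notMem_convexHull {S : Set E} (hfin : S.Finite)
    (hnt : S.Nontrivial) (h0 : (0 : E) ∈ interior (convexHull ℝ S))
    (hvert : ∀ s ∈ S, s ∉ convexHull ℝ (S \ {s})) : IsPositivelyExposed S := by
  intro s hs
  obtain ⟨f, c, hfc, hcs⟩ := geometric_hahn_banach_closed_point (convex_convexHull ℝ _)
    ((hfin.subset Set.sdiff_subset).isClosed_convexHull ℝ) (hvert s hs)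
  have hlt : ∀ t ∈ S, t ≠ s → f t < f s := fun t ht hts =>
    (hfc t (subset_convexHull ℝ _ ⟨ht, hts⟩)).trans hcs
  refine ⟨f, ?_, hlt⟩
  by_contra! hfs
  have hf : f = 0 := by
    refine neg_eq_zero.mp (ContinuousLinearMap.eq_zero_of_nonneg_of_mem_interior h0 fun x hx => ?_)
    have : x ∈ {y | f y ≤ 0} := convexHull_min (fun t ht => by
      rcases eq_or_ne t s with rfl | hts
      · exact hfs
      · exact (hlt t ht hts).le.trans hfs) (convex_halfSpace_le f.isLinear 0) hx
    simpa using this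
  obtain ⟨t, ht, hts⟩ := hnt.exists_ne s
  simpa [hf] using hlt t ht hts

private lemma add_lt_of_smul_eq {f : E →L[ℝ] ℝ} {x z w : E} {a b d : ℝ} (hd : 0 < d)
    (h : d • w = a • x + b • z) (ha : a < 0) (hz : 0 < f z) (hx : f x < f z)
    (hw : f w < f z) : a + b < d := by
  have := congrArg f h
  simp only [map_add, map_smul, smul_eq_mul] at this
  nlinarith [mul_lt_mul_of_neg_left hx ha]

namespace IsPositivelyExposed

variable {S : Set E}

lemma ne_zero (hS : IsPositivelyExposed S) {s : E} (hs : s ∈ S) : s ≠ 0 := by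
  obtain ⟨f, hf, -⟩ := hS s hs
  rintro rfl
  simp at hf

lemma eq_of_eq_smul (hS : IsPositivelyExposed S) {s t : E} (hs : s ∈ S) (ht : t ∈ S) {r : ℝ}
    (hr : 0 < r) (h : t = r • s) : t = s := by
  by_contra hts
  obtain ⟨f, hf, hfs⟩ := hS s hs
  obtain ⟨g, hg, hgt⟩ := hS t ht
  have h₁ := hfs t ht hts
  have h₂ := hgt s hs (Ne.symm hts)
  rw [h, map_smul, smul_eq_mul] at h₁
  rw [h, map_smul, smul_eq_mul] at hg h₂
  nlinarith [mul_pos hr hf]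

lemma lt_two (hS : IsPositivelyExposed S) {x y z : E} (hx : x ∈ S) (hy : y ∈ S) (hz : z ∈ S)
    (hxy : x ≠ y) (hzy : z ≠ y) {a : ℝ} (h : x + z = a • y) : a < 2 := by
  obtain ⟨f, hf, hfy⟩ := hS y hy
  have := congrArg f h
  rw [map_add, map_smul, smul_eq_mul] at this
  nlinarith [hfy x hx hxy, hfy z hz hzy]

/-- A point `w` of `S` outside the closed cone spanned by `x, z ∈ S` lies strictly on the
origin's side of the line through `x` and `z`. -/
lemma add_lt (hS : IsPositivelyExposed S) {x z w : E} (hx : x ∈ S) (hz : z ∈ S) (hw : w ∈ S)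
    (hxz : x ≠ z) (hwx : w ≠ x) (hwz : w ≠ z) {a b d : ℝ} (hd : 0 < d)
    (h : d • w = a • x + b • z) (hab : a < 0 ∨ b < 0) : a + b < d := by
  rcases hab with ha | hb
  · obtain ⟨f, hf, hfz⟩ := hS z hz
    exact add_lt_of_smul_eq hd h ha hf (hfz x hx hxz) (hfz w hw hwz)
  · obtain ⟨f, hf, hfx⟩ := hS x hx
    rw [add_comm] at h ⊢
    exact add_lt_of_smul_eq hd h hb hf (hfx z hz hxz.symm) (hfx w hw hwx)

end IsPositivelyExposed

lemma ContinuousLinearMap.apply_eq_of_mem_segment (φ : E →L[ℝ] ℝ) {x z y : E} {c : ℝ}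
    (hφx : φ x = c) (hφz : φ z = c) (hy : y ∈ segment ℝ x z) : φ y = c := by
  obtain ⟨a, b, -, -, hab, rfl⟩ := hy
  simp [hφx, hφz, ← add_mul, hab]

lemma mem_segment_of_mem_convexHull_of_le (φ : E →L[ℝ] ℝ) {S : Set E} {x z y : E} {c : ℝ}
    (hφx : φ x = c) (hφz : φ z = c) (hlt : ∀ t ∈ S, t ≠ x → t ≠ z → φ t < c)
    (hy : y ∈ convexHull ℝ S) (hcy : c ≤ φ y) : y ∈ segment ℝ x z := by
  have hS : S ⊆ {x, z} ∪ (S \ {x, z}) := by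
    rw [Set.union_sdiff_self]; exact Set.subset_union_right
  rcases (S \ {x, z}).eq_empty_or_nonempty with hT | hT
  · rw [hT, Set.union_empty] at hS
    rw [← convexHull_pair]
    exact convexHull_mono hS hy
  have hy' := convexHull_mono hS hy
  rw [convexHull_union (Set.insert_nonempty _ _) hT, convexHull_pair] at hy'
  obtain ⟨p, hp, q, hq, a, b, ha, hb, hab, rfl⟩ := mem_convexJoin.mp hy'
  have hφq : φ q < c := convexHull_min (fun t (ht : t ∈ S \ {x, z}) => show φ t < c by
    have htxz := ht.2
    simp only [Set.mem_insert_iff, Set.mem_singleton_iff, not_or] at htxz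
    exact hlt t ht.1 htxz.1 htxz.2) (convex_halfSpace_lt φ.isLinear c) hq
  obtain rfl : a = 1 - b := by linarith
  obtain rfl : b = 0 := by
    simp only [map_add, map_smul, smul_eq_mul, φ.apply_eq_of_mem_segment hφx hφz hp] at hcy
    nlinarith
  simpa using hp

lemma isExposed_segment_of_forall_lt (φ : E →L[ℝ] ℝ) {S : Set E} {x z : E} {c : ℝ}
    (hx : x ∈ S) (hz : z ∈ S) (hφx : φ x = c) (hφz : φ z = c)
    (hlt : ∀ t ∈ S, t ≠ x → t ≠ z → φ t < c) :
    IsExposed ℝ (convexHull ℝ S) (segment ℝ x z) := by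
  have hle : ∀ y ∈ convexHull ℝ S, φ y ≤ c := fun y hy =>
    convexHull_min (fun t ht => show φ t ≤ c by
      by_cases htx : t = x
      · exact htx ▸ hφx.le
      by_cases htz : t = z
      · exact htz ▸ hφz.le
      exact (hlt t ht htx htz).le) (convex_halfSpace_le φ.isLinear c) hy
  refine fun _ => ⟨φ, Set.Subset.antisymm (fun y hy => ⟨segment_subset_convexHull hx hz hy,
    fun y' hy' => (hle y' hy').trans (φ.apply_eq_of_mem_segment hφx hφz hy).ge⟩)
    fun y ⟨hy, hymax⟩ => ?_⟩
  exact mem_segment_of_mem_convexHull_of_le φ hφx hφz hlt hy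
    (hφx ▸ hymax x (subset_convexHull ℝ S hx))
end Convex

open Fin.CommRing in
lemma strictMono_angleLift {n : ℕ} [NeZero n] {e : Fin n → ℝ} (he : StrictMono e)
    (hpi : ∀ i, -π < e i ∧ e i ≤ π) :
    StrictMono fun m : ℤ => e m + (m / n : ℤ) * (2 * π) := by
  intro i j hij
  have hn : (0 : ℤ) < n := by exact_mod_cast Nat.pos_of_ne_zero (NeZero.ne n)
  rcases (Int.ediv_le_ediv hn hij.le).lt_or_eq with hq | hq
  · have : ((i / n : ℤ) : ℝ) + 1 ≤ ((j / n : ℤ) : ℝ) := by exact_mod_cast hq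
    nlinarith [hpi i, hpi j, pi_pos]
  · simp only [hq, add_lt_add_iff_right]
    apply he
    have hi := Int.emod_add_mul_ediv i n
    have hj := Int.emod_add_mul_ediv j n
    rw [hq] at hi
    rw [Fin.lt_def, Fin.val_intCast, Fin.val_intCast,
      Int.toNat_lt_toNat (lt_of_le_of_lt (Int.emod_nonneg i hn.ne') (by linarith))]
    linarith

lemma Finset.exists_enumeration_strictMono_comp {α β : Type*} [LinearOrder β] (V : Finset α)
    {key : α → β} (hinj : Set.InjOn key V) :
    ∃ vtx : Fin V.card → α, (∀ i, vtx i ∈ V) ∧ StrictMono (key ∘ vtx) ∧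
      ∀ v ∈ V, ∃ i, vtx i = v := by
  set e := (V.image key).orderEmbOfFin (card_image_of_injOn hinj)
  have he : ∀ i, ∃ v ∈ V, key v = e i := fun i =>
    mem_image.mp ((V.image key).orderEmbOfFin_mem _ i)
  choose vtx hvtx hkey using he
  refine ⟨vtx, hvtx, (funext hkey : key ∘ vtx = e) ▸ e.strictMono, fun v hv => ?_⟩
  obtain ⟨i, hi⟩ : key v ∈ Set.range e := by
    rw [range_orderEmbOfFin]; exact mem_image_of_mem key hv
  exact ⟨i, hinj (hvtx i) hv ((hkey i).trans hi)⟩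

open Fin.CommRing in
lemma exists_angular_enumeration (V : Finset (Fin 2 → ℤ)) (hV : V.Nonempty)
    (hne : ∀ v ∈ V, toR3 v ≠ 0)
    (hray : ∀ v ∈ V, ∀ w ∈ V, ∀ r : ℝ, 0 < r → toR3 w = r • toR3 v → w = v) :
    ∃ (u : ℤ → Fin 2 → ℤ) (θ : ℤ → ℝ), IsAngularSeq V.card u θ ∧ (∀ m, u m ∈ V) ∧
      (∀ v ∈ V, ∀ a : ℤ, ∃ j, a ≤ j ∧ j < a + V.card ∧ u j = v) ∧
      ∀ i j : ℤ, i < j → j < i + V.card → u i ≠ u j := by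
  have hn : (0 : ℤ) < V.card := by exact_mod_cast hV.card_pos
  have : NeZero V.card := ⟨hV.card_pos.ne'⟩
  set key : (Fin 2 → ℤ) → ℝ := fun v => Complex.arg ⟨toR3 v 0, toR3 v 1⟩
  have hkey : ∀ v ∈ V, HasPolarAngle (toR3 v) (key v) := fun v hv => hasPolarAngle_arg (hne v hv)
  have hinj : Set.InjOn key V := fun v hv w hw h => by
    obtain ⟨r, hr, hrw⟩ := (hkey v hv).exists_pos_smul_eq (h ▸ hkey w hw)
    exact (hray v hv w hw r hr hrw).symm
  obtain ⟨vtx, hvtx, hmono, hsurj⟩ := V.exists_enumeration_strictMono_comp hinj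
  have hperiodic : Periodic (fun m : ℤ => vtx m) V.card := fun m => by
    simp only [Int.cast_add, Int.cast_natCast, Fin.natCast_self, add_zero]
  refine ⟨fun m => vtx m, fun m => key (vtx m) + (m / V.card : ℤ) * (2 * π),
    ⟨hperiodic, strictMono_angleLift hmono fun i => ?_, fun m => ?_, fun m => ?_⟩,
    fun m => hvtx m, fun v hv a => ?_, fun i j hij hji hu => ?_⟩
  · exact ⟨Complex.neg_pi_lt_arg _, Complex.arg_le_pi _⟩
  · simp only [Int.cast_add, Int.cast_natCast, Fin.natCast_self, add_zero,
      Int.add_ediv_of_dvd_right (dvd_refl (V.card : ℤ)), Int.ediv_self hn.ne']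
    push_cast; ring
  · exact (hkey _ (hvtx m)).add_int_mul_two_pi _
  · obtain ⟨i, rfl⟩ := hsurj v hv
    obtain ⟨j, hj, hji⟩ := hperiodic.exists_mem_Ico hn ((i : ℕ) : ℤ) a
    exact ⟨j, hj.1, hj.2, by simp [← hji]⟩
  · have hmod : i % V.card = j % V.card := by
      have := congrArg Fin.val (hmono.injective (congrArg key hu))
      rw [Fin.val_intCast, Fin.val_intCast] at this
      have := Int.emod_nonneg i hn.ne'
      have := Int.emod_nonneg j hn.ne'
      omega
    have := Int.le_of_dvd (by omega) (Int.ModEq.dvd hmod)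
    omega

def det2CLM (x : Fin 2 → ℝ) : (Fin 2 → ℝ) →L[ℝ] ℝ :=
  x 0 • ContinuousLinearMap.proj 1 - x 1 • ContinuousLinearMap.proj 0

@[simp] lemma det2CLM_apply (x y : Fin 2 → ℝ) : det2CLM x y = det2 x y := by
  simp [det2CLM, det2, mul_comm]

section Polygon

variable {V : Finset (Fin 2 → ℤ)} {u : ℤ → Fin 2 → ℤ} {θ : ℤ → ℝ}

/-- Consecutive vertices are less than `π` apart, for otherwise all vertices would lie in a
closed half-plane, which cannot contain the origin in its interior. -/
lemma IsAngularSeq.det2_succ_pos (hang : IsAngularSeq V.card u θ)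
    (hint : (0 : Fin 2 → ℝ) ∈ interior (convexHull ℝ (toR3 '' V)))
    (hsurj : ∀ v ∈ V, ∀ a : ℤ, ∃ j, a ≤ j ∧ j < a + V.card ∧ u j = v) (m : ℤ) :
    0 < det2 (u m) (u (m + 1)) := by
  rw [← Int.cast_pos (R := ℝ), det2_toR3]
  refine hang.det2_pos_of_lt_pi (lt_add_one m) ?_
  by_contra! hgap
  set z := toR3 (u (m + 1))
  have hhalf : ∀ y ∈ convexHull ℝ (toR3 '' V), 0 ≤ det2CLM z y := fun y hy => by
    refine convexHull_min ?_ (convex_halfSpace_ge (det2CLM z).isLinear 0) hy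
    rintro _ ⟨v, hv, rfl⟩
    obtain ⟨j, hj₁, hj₂, rfl⟩ := hsurj v hv (m + 1)
    have hθj := hang.strictMono.monotone (show j ≤ m + V.card by omega)
    change 0 ≤ det2CLM z (toR3 (u j))
    rw [det2CLM_apply]
    exact hang.det2_nonneg_of_le_pi hj₁ (by linarith [hang.add_period m])
  have hz := ContinuousLinearMap.eq_zero_of_nonneg_of_mem_interior hint hhalf
  refine (hang.hasPolarAngle (m + 1)).ne_zero (funext fun i => ?_)
  fin_cases i
  · simpa [det2] using congrArg (· ![0, 1]) hz
  · simpa [det2] using congrArg (· ![1, 0]) hz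

lemma IsPositivelyExposed.isExposed_segment_succ (hS : IsPositivelyExposed (toR3 '' V))
    (hang : IsAngularSeq V.card u θ) (hmem : ∀ m, u m ∈ V)
    (hsurj : ∀ v ∈ V, ∀ a : ℤ, ∃ j, a ≤ j ∧ j < a + V.card ∧ u j = v)
    (hne : ∀ i j : ℤ, i < j → j < i + V.card → u i ≠ u j)
    (hpos : ∀ m, 0 < det2 (u m) (u (m + 1))) (hn : 2 ≤ V.card) (m : ℤ) :
    IsExposed ℝ (convexHull ℝ (toR3 '' V)) (segment ℝ (toR3 (u m)) (toR3 (u (m + 1)))) := by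
  set x := toR3 (u m)
  set z := toR3 (u (m + 1))
  have hd : 0 < det2 x z := by rw [← det2_toR3]; exact_mod_cast hpos m
  have hxz : x ≠ z := toR3_injective.ne (hne m (m + 1) (by omega) (by omega))
  refine isExposed_segment_of_forall_lt (det2CLM (x - z)) (Set.mem_image_of_mem _ (hmem m))
    (Set.mem_image_of_mem _ (hmem (m + 1))) (c := det2 x z) (by simp [det2_sub_left, det2_swap z])
    (by simp [det2_sub_left]) ?_
  rintro _ ⟨w, hw, rfl⟩ hwx hwz
  obtain ⟨j, hj₁, hj₂, rfl⟩ := hsurj w hw (m + 1)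
  have hj₁' : m + 1 < j := lt_of_le_of_ne hj₁ (by rintro rfl; exact hwz rfl)
  have hj₂' : j < m + V.card := lt_of_le_of_ne (by omega) (by rintro rfl; exact hwx (by
    simp only [x, hang.periodic m]))
  -- `u j` is not in the closed cone spanned by `x` and `z`
  have hout : det2 (toR3 (u j)) z < 0 ∨ det2 x (toR3 (u j)) < 0 := by
    by_contra! h
    have h₁ := hang.le_pi_of_det2_nonneg hj₂' h.2
    have h₂ := hang.pi_le_of_det2_nonpos hj₁' (by rw [det2_swap]; linarith [h.1])
    linarith [hang.strictMono (lt_add_one m)]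
  have := hS.add_lt (Set.mem_image_of_mem _ (hmem m)) (Set.mem_image_of_mem _ (hmem (m + 1)))
    (Set.mem_image_of_mem _ hw) hxz hwx hwz hd (det2_smul_eq x z _) hout
  rw [det2CLM_apply, det2_sub_left, det2_swap (toR3 (u j)) z]
  linarith

theorem exists_isFanoSeq (hvert : ∀ v ∈ V,
      toR3 v ∉ convexHull ℝ (toR3 '' ((V.erase v : Finset (Fin 2 → ℤ)) : Set (Fin 2 → ℤ))))
    (hint : (0 : Fin 2 → ℝ) ∈ interior (convexHull ℝ (toR3 '' V)))
    (hedge : ∀ u v : Fin 2 → ℤ, u ∈ V → v ∈ V → u ≠ v →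
      IsExposed ℝ (convexHull ℝ (toR3 '' V)) (segment ℝ (toR3 u) (toR3 v)) →
      Submodule.span ℤ {u, v} = ⊤)
    (hn : 3 ≤ V.card) : ∃ u θ, IsFanoSeq V.card u θ := by
  have hS : IsPositivelyExposed (toR3 '' V) := by
    refine isPositivelyExposed_of_notMem_convexHull (V.finite_toSet.image _)
      ((one_lt_card_iff_nontrivial.mp (by omega)).image toR3_injective) hint ?_
    rintro _ ⟨v, hv, rfl⟩
    simpa [Set.image_sdiff toR3_injective] using hvert v hv
  have hmemS : ∀ v ∈ V, toR3 v ∈ toR3 '' V := fun v hv => Set.mem_image_of_mem _ hv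
  obtain ⟨u, θ, hang, hmem, hsurj, hne⟩ := exists_angular_enumeration V (card_pos.mp (by omega))
    (fun v hv => hS.ne_zero (hmemS v hv))
    (fun v hv w hw r hr h => toR3_injective (hS.eq_of_eq_smul (hmemS v hv) (hmemS w hw) hr h))
  have hpos := hang.det2_succ_pos hint hsurj
  have hdet : ∀ m, det2 (u m) (u (m + 1)) = 1 := fun m =>
    Int.eq_one_of_dvd_one (hpos m).le <| det2_dvd_one_of_span_eq_top <|
      hedge _ _ (hmem m) (hmem (m + 1)) (hne m (m + 1) (by omega) (by omega))
        (hS.isExposed_segment_succ hang hmem hsurj hne hpos (by omega) m)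
  refine ⟨u, θ, { hang with det2_succ := hdet, fanCoeff_le_one := fun k => ?_ }⟩
  have hrel := congrArg toR3 (add_eq_fanCoeff_smul hdet k)
  rw [toR3_add, toR3_smul] at hrel
  have := hS.lt_two (hmemS _ (hmem (k - 1))) (hmemS _ (hmem k)) (hmemS _ (hmem (k + 1)))
    (toR3_injective.ne (hne (k - 1) k (by omega) (by omega)))
    (toR3_injective.ne (hne k (k + 1) (by omega) (by omega)).symm) hrel
  exact Int.lt_add_one_iff.mp (by exact_mod_cast this)

end Polygon

theorem stmt_3_general (V : Finset (Fin 2 → ℤ)) (P : Set (Fin 2 → ℝ))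
    (hP : P = convexHull ℝ (toR3 '' (V : Set (Fin 2 → ℤ))))
    (hvert : ∀ v ∈ V, toR3 v ∉ convexHull ℝ (toR3 '' ((V.erase v : Finset (Fin 2 → ℤ)) : Set (Fin 2 → ℤ))))
    (hint : (0 : Fin 2 → ℝ) ∈ interior P)
    (hedge : ∀ u v : Fin 2 → ℤ, u ∈ V → v ∈ V → u ≠ v →
      IsExposed ℝ P (segment ℝ (toR3 u) (toR3 v)) → IsZBasis3 u v) :
    V.card ≤ 6 := by
  subst hP
  rcases lt_or_ge V.card 3 with hn | hn
  · omega
  obtain ⟨u, θ, h⟩ := exists_isFanoSeq hvert hint (fun u v hu hv huv hexp =>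
    (hedge u v hu hv huv hexp).2) hn
  have hle := sum_le_card_nsmul (range V.card) (fun k : ℕ => fanCoeff u k) 1
    fun k _ => h.fanCoeff_le_one k
  rw [h.sum_fanCoeff hn, card_range, nsmul_one] at hle
  omega

/-- Every 2-dimensional smooth Fano polytope has at most 6 vertices.  Here `V` is
the vertex set of the lattice polygon `P = convexHull (V : ℝ²)`: the origin lies in
the interior of `P`, the dual polytope of `P` is a lattice polytope, and the two
vertices of each edge (exposed segment) of `P` form a `ℤ`-basis of `ℤ²`. -/
theorem stmt_3 (V : Finset (Fin 2 → ℤ)) (P : Set (Fin 2 → ℝ))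
    (hP : P = convexHull ℝ (toR3 '' (V : Set (Fin 2 → ℤ))))
    (hvert : ∀ v ∈ V, toR3 v ∉ convexHull ℝ (toR3 '' ((V.erase v : Finset (Fin 2 → ℤ)) : Set (Fin 2 → ℤ))))
    (hint : (0 : Fin 2 → ℝ) ∈ interior P)
    (hdual : ∃ S : Finset (Fin 2 → ℝ), (∀ v ∈ S, IsLatticePoint3 v) ∧
      dualPolytope3 P = convexHull ℝ (S : Set (Fin 2 → ℝ)))
    (hedge : ∀ u v : Fin 2 → ℤ, u ∈ V → v ∈ V → u ≠ v →
      IsExposed ℝ P (segment ℝ (toR3 u) (toR3 v)) → IsZBasis3 u v) :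
    V.card ≤ 6 :=
  stmt_3_general V P hP hvert hint hedge
end

section
/- Let F be a smooth function on the open set U = {(x₁,x₂,x₃,x₄) ∈ ℝ⁴ : x₄³ + 27x₁x₂x₃ ≠ 0} annihilated by the Euler-type operators x₄∂₄ + 3x₁∂₁ + 1, x₄∂₄ + 3x₂∂₂ + 1, x₄∂₄ + 3x₃∂₃ + 1 and by the operator ∂₁∂₂∂₃ - ∂₄³. Then F also satisfies (x₄³ + 27x₁x₂x₃)∂₄²F + 3x₄²∂₄F + x₄F = 0 on U. -/
/-- Partial derivative of a function of 4 real variables in the `i`-th direction. -/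
noncomputable def pd8 (i : Fin 4) (F : (Fin 4 → ℝ) → ℝ) : (Fin 4 → ℝ) → ℝ :=
  fun x => fderiv ℝ F x (Pi.single i 1)

abbrev X4 := Fin 4 → ℝ

lemma pd8_add {f g : X4 → ℝ} {x : X4} (j : Fin 4) (hf : DifferentiableAt ℝ f x)
    (hg : DifferentiableAt ℝ g x) :
    pd8 j (fun y => f y + g y) x = pd8 j f x + pd8 j g x := by
  simp only [pd8]
  rw [fderiv_fun_add hf hg]; rfl

lemma pd8_mul {f g : X4 → ℝ} {x : X4} (j : Fin 4) (hf : DifferentiableAt ℝ f x)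
    (hg : DifferentiableAt ℝ g x) :
    pd8 j (fun y => f y * g y) x = f x * pd8 j g x + g x * pd8 j f x := by
  simp only [pd8]
  rw [fderiv_fun_mul hf hg]; rfl

lemma pd8_coord {x : X4} (i j : Fin 4) :
    pd8 j (fun y : X4 => y i) x = if i = j then 1 else 0 := by
  have h : (fun y : X4 => y i) = (ContinuousLinearMap.proj i : X4 →L[ℝ] ℝ) := rfl
  simp only [pd8, h, ContinuousLinearMap.fderiv]
  simp [ContinuousLinearMap.proj_apply, Pi.single_apply]

lemma pd8_const_mul {f : X4 → ℝ} {x : X4} (j : Fin 4) (c : ℝ) (hf : DifferentiableAt ℝ f x) :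
    pd8 j (fun y => c * f y) x = c * pd8 j f x := by
  simp only [pd8]
  rw [fderiv_const_mul hf]; rfl

lemma pd8_zero_of_eqOn {U : Set X4} (hU : IsOpen U) {g : X4 → ℝ}
    (hg : ∀ y ∈ U, g y = 0) {x : X4} (hx : x ∈ U) (j : Fin 4) : pd8 j g x = 0 := by
  have h : g =ᶠ[nhds x] (fun _ => (0:ℝ)) :=
    Filter.eventually_of_mem (hU.mem_nhds hx) hg
  simp only [pd8, h.fderiv_eq, fderiv_const]
  simp

lemma pd8_contDiffOn {U : Set X4} (hU : IsOpen U) {f : X4 → ℝ}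
    (hf : ContDiffOn ℝ (⊤ : ℕ∞) f U) (i : Fin 4) : ContDiffOn ℝ (⊤ : ℕ∞) (pd8 i f) U := by
  have h1 : ContDiffOn ℝ (⊤ : ℕ∞) (fderiv ℝ f) U := hf.fderiv_of_isOpen hU (by simp)
  exact h1.clm_apply contDiffOn_const

lemma pd8_diffAt {U : Set X4} (hU : IsOpen U) {f : X4 → ℝ}
    (hf : ContDiffOn ℝ (⊤ : ℕ∞) f U) {x : X4} (hx : x ∈ U) : DifferentiableAt ℝ f x :=
  ((hf x hx).contDiffAt (hU.mem_nhds hx)).differentiableAt (by simp)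

/-- Symmetry of second partial derivatives for smooth functions on an open set. -/
lemma pd8_symm {U : Set X4} (hU : IsOpen U) {f : X4 → ℝ}
    (hf : ContDiffOn ℝ (⊤ : ℕ∞) f U) {x : X4} (hx : x ∈ U) (a b : Fin 4) :
    pd8 a (pd8 b f) x = pd8 b (pd8 a f) x := by
  have hC : ContDiffAt ℝ (⊤ : ℕ∞) f x := (hf x hx).contDiffAt (hU.mem_nhds hx)
  have hsym : IsSymmSndFDerivAt ℝ f x := hC.isSymmSndFDerivAt (by simp only [minSmoothness_of_isRCLikeNormedField]; exact WithTop.coe_le_coe.2 (le_top : (2:ℕ∞) ≤ ⊤))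
  have hd : DifferentiableAt ℝ (fderiv ℝ f) x := by
    have := (pd8_contDiffOn hU hf 0)  -- dummy
    have h1 : ContDiffOn ℝ (⊤ : ℕ∞) (fderiv ℝ f) U := hf.fderiv_of_isOpen hU (by simp)
    exact ((h1 x hx).contDiffAt (hU.mem_nhds hx)).differentiableAt (by simp)
  have key : ∀ u c : Fin 4, pd8 u (pd8 c f) x
      = fderiv ℝ (fderiv ℝ f) x (Pi.single u 1) (Pi.single c 1) := by
    intro u c
    rw [show pd8 u (pd8 c f) x = fderiv ℝ (fun y => (fderiv ℝ f y) (Pi.single c (1:ℝ))) x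
        (Pi.single u 1) from rfl]
    rw [fderiv_clm_apply hd (differentiableAt_const _)]
    simp
  rw [key a b, key b a]
  exact hsym _ _


lemma pd8_diffAt_coord {x : X4} (i : Fin 4) : DifferentiableAt ℝ (fun y : X4 => y i) x := by
  have h : (fun y : X4 => y i) = (ContinuousLinearMap.proj i : X4 →L[ℝ] ℝ) := rfl
  rw [h]; exact (ContinuousLinearMap.proj (R := ℝ) (φ := fun _ : Fin 4 => ℝ) i).differentiableAt

/-- Generic differentiation step for relations of the shape `x₃·u + 3xᵢ·v + w = 0` on `U`. -/
lemma pd8_rel_step {U : Set X4} (hUo : IsOpen U) (i : Fin 4) {u v w : X4 → ℝ}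
    (hu : ContDiffOn ℝ (⊤ : ℕ∞) u U) (hv : ContDiffOn ℝ (⊤ : ℕ∞) v U) (hw : ContDiffOn ℝ (⊤ : ℕ∞) w U)
    (h : ∀ x ∈ U, x 3 * u x + 3 * x i * v x + w x = 0) (m : Fin 4) :
    ∀ x ∈ U, x 3 * pd8 m u x + 3 * x i * pd8 m v x
      + (pd8 m w x + (if (3:Fin 4) = m then u x else 0)
        + (if i = m then 3 * v x else 0)) = 0 := by
  intro x hx
  have hu' := pd8_diffAt hUo hu hx
  have hv' := pd8_diffAt hUo hv hx
  have hw' := pd8_diffAt hUo hw hx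
  have d1 : DifferentiableAt ℝ (fun y : X4 => y 3 * u y) x :=
    (pd8_diffAt_coord 3).mul hu'
  have d2 : DifferentiableAt ℝ (fun y : X4 => 3 * y i * v y) x :=
    ((differentiableAt_const (3:ℝ)).mul (pd8_diffAt_coord i)).mul hv'
  have h0 : pd8 m (fun y : X4 => (y 3 * u y + 3 * y i * v y) + w y) x = 0 :=
    pd8_zero_of_eqOn hUo h hx m
  rw [pd8_add m (d1.fun_add d2) hw', pd8_add m d1 d2,
      pd8_mul m (pd8_diffAt_coord 3) hu',
      pd8_mul m ((differentiableAt_const (3:ℝ)).fun_mul (pd8_diffAt_coord i)) hv'] at h0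
  have e1 : pd8 m (fun y : X4 => y 3) x = if (3:Fin 4) = m then 1 else 0 := pd8_coord 3 m
  have e2 : pd8 m (fun y : X4 => 3 * y i) x = 3 * (if i = m then 1 else 0) := by
    rw [pd8_const_mul m 3 (pd8_diffAt_coord i), pd8_coord i m]
  rw [e1, e2] at h0
  split_ifs at h0 ⊢ <;> linarith


lemma pd8_congr {U : Set X4} (hUo : IsOpen U) {f g : X4 → ℝ} (h : ∀ y ∈ U, f y = g y)
    {x : X4} (hx : x ∈ U) (m : Fin 4) : pd8 m f x = pd8 m g x := by
  have he : f =ᶠ[nhds x] g := Filter.eventually_of_mem (hUo.mem_nhds hx) h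
  simp only [pd8, he.fderiv_eq]

/-- Expansion of the derivative of the goal combination. -/
lemma pd8_G_expand {U : Set X4} (hUo : IsOpen U) {H A W : X4 → ℝ}
    (hH : ContDiffOn ℝ (⊤ : ℕ∞) H U) (hA : ContDiffOn ℝ (⊤ : ℕ∞) A U) (hW : ContDiffOn ℝ (⊤ : ℕ∞) W U)
    (m : Fin 4) {x : X4} (hx : x ∈ U) :
    pd8 m (fun y => (y 3 * (y 3 * y 3) + 27 * y 0 * (y 1 * y 2)) * H y
        + 3 * (y 3 * y 3) * A y + y 3 * W y) x
    = (3 * (x 3 * x 3) * (if (3:Fin 4) = m then 1 else 0)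
        + 27 * ((if (0:Fin 4) = m then 1 else 0) * (x 1 * x 2)
          + x 0 * (x 1 * (if (2:Fin 4) = m then 1 else 0)
            + x 2 * (if (1:Fin 4) = m then 1 else 0)))) * H x
      + (x 3 * (x 3 * x 3) + 27 * x 0 * (x 1 * x 2)) * pd8 m H x
      + 6 * x 3 * (if (3:Fin 4) = m then 1 else 0) * A x + 3 * (x 3 * x 3) * pd8 m A x
      + (if (3:Fin 4) = m then 1 else 0) * W x + x 3 * pd8 m W x := by
  have dH := pd8_diffAt hUo hH hx
  have dA := pd8_diffAt hUo hA hx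
  have dW := pd8_diffAt hUo hW hx
  have d3 := pd8_diffAt_coord (x := x) 3
  have d33 : DifferentiableAt ℝ (fun y : X4 => y 3 * y 3) x := d3.mul d3
  have dP : DifferentiableAt ℝ (fun y : X4 => y 3 * (y 3 * y 3) + 27 * y 0 * (y 1 * y 2)) x :=
    (d3.mul d33).add (((differentiableAt_const _).mul (pd8_diffAt_coord 0)).mul
      ((pd8_diffAt_coord 1).mul (pd8_diffAt_coord 2)))
  have dQ : DifferentiableAt ℝ (fun y : X4 => 3 * (y 3 * y 3)) x :=
    (differentiableAt_const _).mul d33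
  have h0 : pd8 m (fun y => ((y 3 * (y 3 * y 3) + 27 * y 0 * (y 1 * y 2)) * H y
      + 3 * (y 3 * y 3) * A y) + y 3 * W y) x
      = pd8 m (fun y => (y 3 * (y 3 * y 3) + 27 * y 0 * (y 1 * y 2)) * H y
          + 3 * (y 3 * y 3) * A y) x + pd8 m (fun y => y 3 * W y) x :=
    pd8_add m ((dP.fun_mul dH).fun_add (dQ.fun_mul dA)) (d3.fun_mul dW)
  have h1 : pd8 m (fun y => (y 3 * (y 3 * y 3) + 27 * y 0 * (y 1 * y 2)) * H y
      + 3 * (y 3 * y 3) * A y) x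
      = pd8 m (fun y => (y 3 * (y 3 * y 3) + 27 * y 0 * (y 1 * y 2)) * H y) x
        + pd8 m (fun y => 3 * (y 3 * y 3) * A y) x :=
    pd8_add m (dP.fun_mul dH) (dQ.fun_mul dA)
  have h2 : pd8 m (fun y => (y 3 * (y 3 * y 3) + 27 * y 0 * (y 1 * y 2)) * H y) x
      = (x 3 * (x 3 * x 3) + 27 * x 0 * (x 1 * x 2)) * pd8 m H x
        + H x * pd8 m (fun y => y 3 * (y 3 * y 3) + 27 * y 0 * (y 1 * y 2)) x :=
    pd8_mul m dP dH
  have h3 : pd8 m (fun y => 3 * (y 3 * y 3) * A y) x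
      = 3 * (x 3 * x 3) * pd8 m A x + A x * pd8 m (fun y => 3 * (y 3 * y 3)) x :=
    pd8_mul m dQ dA
  have h4 : pd8 m (fun y => y 3 * W y) x
      = x 3 * pd8 m W x + W x * pd8 m (fun y : X4 => y 3) x :=
    pd8_mul m d3 dW
  have h5 : pd8 m (fun y : X4 => y 3 * (y 3 * y 3) + 27 * y 0 * (y 1 * y 2)) x
      = (x 3 * pd8 m (fun y : X4 => y 3 * y 3) x
          + (x 3 * x 3) * pd8 m (fun y : X4 => y 3) x)
        + ((27 * x 0) * pd8 m (fun y : X4 => y 1 * y 2) x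
          + (x 1 * x 2) * pd8 m (fun y : X4 => 27 * y 0) x) := by
    have := pd8_add m (f := fun y : X4 => y 3 * (y 3 * y 3))
      (g := fun y : X4 => 27 * y 0 * (y 1 * y 2)) (d3.fun_mul d33)
      (((differentiableAt_const _).fun_mul (pd8_diffAt_coord 0)).fun_mul ((pd8_diffAt_coord 1).fun_mul (pd8_diffAt_coord 2)))
    rw [this, pd8_mul m d3 d33,
      pd8_mul m ((differentiableAt_const _).fun_mul (pd8_diffAt_coord 0)) ((pd8_diffAt_coord 1).fun_mul (pd8_diffAt_coord 2))]
  have h6 : pd8 m (fun y : X4 => y 3 * y 3) x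
      = x 3 * pd8 m (fun y : X4 => y 3) x + x 3 * pd8 m (fun y : X4 => y 3) x :=
    pd8_mul m d3 d3
  have h7 : pd8 m (fun y : X4 => y 1 * y 2) x
      = x 1 * pd8 m (fun y : X4 => y 2) x + x 2 * pd8 m (fun y : X4 => y 1) x :=
    pd8_mul m (pd8_diffAt_coord 1) (pd8_diffAt_coord 2)
  have h8 : pd8 m (fun y : X4 => 27 * y 0) x = 27 * pd8 m (fun y : X4 => y 0) x :=
    pd8_const_mul m 27 (pd8_diffAt_coord 0)
  have h9 : pd8 m (fun y : X4 => 3 * (y 3 * y 3)) x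
      = 3 * pd8 m (fun y : X4 => y 3 * y 3) x := pd8_const_mul m 3 d33
  rw [h0, h1, h2, h3, h4, h5, h9, h6, h7, h8, pd8_coord 0 m, pd8_coord 1 m, pd8_coord 2 m,
    pd8_coord 3 m]
  ring



/-- Every point of `U` can be joined to the `x₄`-axis inside `U`, where `G` vanishes. -/
lemma pd8_connect (U : Set X4) (hU : U = {x : X4 | x 3 ^ 3 + 27 * x 0 * x 1 * x 2 ≠ 0})
    (G : X4 → ℝ) (seg0 : ∀ a b : X4, (∀ z ∈ segment ℝ a b, z ∈ U) → G a = G b)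
    (hax : ∀ T : ℝ, T ≠ 0 → G (Pi.single (3:Fin 4) T : X4) = 0) :
    ∀ x ∈ U, G x = 0 := by
  intro x hx
  have hxd : x 3 ^ 3 + 27 * x 0 * x 1 * x 2 ≠ 0 := by rw [hU] at hx; exact hx
  have main : ∀ T : ℝ, T ≠ 0 →
      (∀ s : ℝ, 0 ≤ s → s ≤ 1 → ((1 - s) * x 3 + s * T) ^ 3 + 27 * x 0 * x 1 * x 2 ≠ 0) →
      (∀ s : ℝ, 0 ≤ s → s ≤ 1 → T ^ 3 + 27 * (s * x 0) * (s * x 1) * (s * x 2) ≠ 0) →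
      G x = 0 := by
    intro T hT0 hseg1 hseg2
    set b : X4 := Function.update x 3 T with hbdef
    have hb3 : b 3 = T := by rw [hbdef]; simp [Function.update_apply]
    have hb0 : b 0 = x 0 := by rw [hbdef]; simp [Function.update_apply]
    have hb1 : b 1 = x 1 := by rw [hbdef]; simp [Function.update_apply]
    have hb2 : b 2 = x 2 := by rw [hbdef]; simp [Function.update_apply]
    set c : X4 := (Pi.single (3:Fin 4) T : X4) with hcdef
    have hc3 : c 3 = T := by rw [hcdef]; simp [Pi.single_apply]
    have hc0 : c 0 = 0 := by rw [hcdef]; simp [Pi.single_apply]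
    have hc1 : c 1 = 0 := by rw [hcdef]; simp [Pi.single_apply]
    have hc2 : c 2 = 0 := by rw [hcdef]; simp [Pi.single_apply]
    have hs1 : ∀ z ∈ segment ℝ x b, z ∈ U := by
      intro z hz
      obtain ⟨u, v, hu, hv, huv, rfl⟩ := hz
      rw [hU]
      show (u • x + v • b) 3 ^ 3 + 27 * (u • x + v • b) 0 * (u • x + v • b) 1
        * (u • x + v • b) 2 ≠ 0
      have z3 : (u • x + v • b) 3 = (1 - v) * x 3 + v * T := by
        simp only [Pi.add_apply, Pi.smul_apply, smul_eq_mul, hb3]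
        linear_combination x 3 * huv
      have z0 : (u • x + v • b) 0 = x 0 := by
        simp only [Pi.add_apply, Pi.smul_apply, smul_eq_mul, hb0]
        linear_combination x 0 * huv
      have z1 : (u • x + v • b) 1 = x 1 := by
        simp only [Pi.add_apply, Pi.smul_apply, smul_eq_mul, hb1]
        linear_combination x 1 * huv
      have z2 : (u • x + v • b) 2 = x 2 := by
        simp only [Pi.add_apply, Pi.smul_apply, smul_eq_mul, hb2]
        linear_combination x 2 * huv
      rw [z3, z0, z1, z2]
      exact hseg1 v hv (by linarith)
    have hs2 : ∀ z ∈ segment ℝ b c, z ∈ U := by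
      intro z hz
      obtain ⟨u, v, hu, hv, huv, rfl⟩ := hz
      rw [hU]
      show (u • b + v • c) 3 ^ 3 + 27 * (u • b + v • c) 0 * (u • b + v • c) 1
        * (u • b + v • c) 2 ≠ 0
      have z3 : (u • b + v • c) 3 = T := by
        simp only [Pi.add_apply, Pi.smul_apply, smul_eq_mul, hb3, hc3]
        linear_combination T * huv
      have z0 : (u • b + v • c) 0 = u * x 0 := by
        simp [Pi.add_apply, Pi.smul_apply, smul_eq_mul, hb0, hc0]
      have z1 : (u • b + v • c) 1 = u * x 1 := by
        simp [Pi.add_apply, Pi.smul_apply, smul_eq_mul, hb1, hc1]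
      have z2 : (u • b + v • c) 2 = u * x 2 := by
        simp [Pi.add_apply, Pi.smul_apply, smul_eq_mul, hb2, hc2]
      rw [z3, z0, z1, z2]
      exact hseg2 u hu (by linarith)
    rw [seg0 x b hs1, seg0 b c hs2]
    exact hax T hT0
  rcases hxd.lt_or_gt with hneg | hpos
  · -- negative case : move x₄ down
    refine main (min (x 3) (-(1 + |27 * x 0 * x 1 * x 2|))) ?_ ?_ ?_
    · have : min (x 3) (-(1 + |27 * x 0 * x 1 * x 2|)) ≤ -1 :=
        le_trans (min_le_right _ _) (by nlinarith [abs_nonneg (27 * x 0 * x 1 * x 2)])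
      intro h; rw [h] at this; linarith
    · intro s hs0 hs1
      set T := min (x 3) (-(1 + |27 * x 0 * x 1 * x 2|)) with hT
      have hTx : T ≤ x 3 := min_le_left _ _
      have hle : (1 - s) * x 3 + s * T ≤ x 3 := by nlinarith [mul_nonneg hs0 (sub_nonneg.2 hTx)]
      have hcube : ((1 - s) * x 3 + s * T) ^ 3 ≤ x 3 ^ 3 := by
        nlinarith [mul_nonneg (sub_nonneg.2 hle) (sq_nonneg ((1 - s) * x 3 + s * T + x 3)),
          mul_nonneg (sub_nonneg.2 hle) (sq_nonneg ((1 - s) * x 3 + s * T - x 3))]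
      exact ne_of_lt (by linarith)
    · intro s hs0 hs1
      set T := min (x 3) (-(1 + |27 * x 0 * x 1 * x 2|)) with hT
      have hT2 : T ≤ -(1 + |27 * x 0 * x 1 * x 2|) := min_le_right _ _
      have hTq : T ^ 3 < -|27 * x 0 * x 1 * x 2| := by
        nlinarith [abs_nonneg (27 * x 0 * x 1 * x 2), sq_nonneg T,
          sq_nonneg (T + (1 + |27 * x 0 * x 1 * x 2|)),
          mul_nonneg (mul_nonneg (abs_nonneg (27 * x 0 * x 1 * x 2))
            (abs_nonneg (27 * x 0 * x 1 * x 2))) (abs_nonneg (27 * x 0 * x 1 * x 2))]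
      have hq : 27 * (s * x 0) * (s * x 1) * (s * x 2) ≤ |27 * x 0 * x 1 * x 2| := by
        nlinarith [mul_nonneg (mul_nonneg hs0 hs0) hs0,
          mul_nonneg (sub_nonneg.2 (show s * (s * s) ≤ 1 by nlinarith))
            (abs_nonneg (27 * x 0 * x 1 * x 2)),
          mul_nonneg (mul_nonneg (mul_nonneg hs0 hs0) hs0)
            (sub_nonneg.2 (le_abs_self (27 * x 0 * x 1 * x 2)))]
      exact ne_of_lt (by linarith)
  · -- positive case : move x₄ up
    refine main (max (x 3) (1 + |27 * x 0 * x 1 * x 2|)) ?_ ?_ ?_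
    · have : (1:ℝ) ≤ max (x 3) (1 + |27 * x 0 * x 1 * x 2|) :=
        le_trans (by nlinarith [abs_nonneg (27 * x 0 * x 1 * x 2)]) (le_max_right _ _)
      intro h; rw [h] at this; linarith
    · intro s hs0 hs1
      set T := max (x 3) (1 + |27 * x 0 * x 1 * x 2|) with hT
      have hTx : x 3 ≤ T := le_max_left _ _
      have hle : x 3 ≤ (1 - s) * x 3 + s * T := by nlinarith [mul_nonneg hs0 (sub_nonneg.2 hTx)]
      have hcube : x 3 ^ 3 ≤ ((1 - s) * x 3 + s * T) ^ 3 := by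
        nlinarith [mul_nonneg (sub_nonneg.2 hle) (sq_nonneg ((1 - s) * x 3 + s * T + x 3)),
          mul_nonneg (sub_nonneg.2 hle) (sq_nonneg ((1 - s) * x 3 + s * T - x 3))]
      exact ne_of_gt (by linarith)
    · intro s hs0 hs1
      set T := max (x 3) (1 + |27 * x 0 * x 1 * x 2|) with hT
      have hT2 : 1 + |27 * x 0 * x 1 * x 2| ≤ T := le_max_right _ _
      have hTq : |27 * x 0 * x 1 * x 2| < T ^ 3 := by
        nlinarith [abs_nonneg (27 * x 0 * x 1 * x 2), sq_nonneg T,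
          sq_nonneg (T - (1 + |27 * x 0 * x 1 * x 2|)),
          mul_nonneg (mul_nonneg (abs_nonneg (27 * x 0 * x 1 * x 2))
            (abs_nonneg (27 * x 0 * x 1 * x 2))) (abs_nonneg (27 * x 0 * x 1 * x 2))]
      have hq : -|27 * x 0 * x 1 * x 2| ≤ 27 * (s * x 0) * (s * x 1) * (s * x 2) := by
        nlinarith [mul_nonneg (mul_nonneg hs0 hs0) hs0,
          mul_nonneg (sub_nonneg.2 (show s * (s * s) ≤ 1 by nlinarith))
            (abs_nonneg (27 * x 0 * x 1 * x 2)),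
          mul_nonneg (mul_nonneg (mul_nonneg hs0 hs0) hs0)
            (sub_nonneg.2 (neg_abs_le (27 * x 0 * x 1 * x 2)))]
      exact ne_of_gt (by linarith)

/-- If a smooth function `F` on `U = {x : x₄³ + 27x₁x₂x₃ ≠ 0}` is annihilated by the
three Euler operators `x₄∂₄ + 3xᵢ∂ᵢ + 1` (i = 1,2,3) and by `∂₁∂₂∂₃ - ∂₄³`, then it
also satisfies `(x₄³ + 27x₁x₂x₃)∂₄²F + 3x₄²∂₄F + x₄F = 0` on `U`. -/
theorem stmt_8 (U : Set (Fin 4 → ℝ))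
    (hU : U = {x : Fin 4 → ℝ | x 3 ^ 3 + 27 * x 0 * x 1 * x 2 ≠ 0})
    (F : (Fin 4 → ℝ) → ℝ) (hF : ContDiffOn ℝ (⊤ : ℕ∞) F U)
    (h1 : ∀ x ∈ U, x 3 * pd8 3 F x + 3 * x 0 * pd8 0 F x + F x = 0)
    (h2 : ∀ x ∈ U, x 3 * pd8 3 F x + 3 * x 1 * pd8 1 F x + F x = 0)
    (h3 : ∀ x ∈ U, x 3 * pd8 3 F x + 3 * x 2 * pd8 2 F x + F x = 0)
    (h4 : ∀ x ∈ U, pd8 0 (pd8 1 (pd8 2 F)) x = pd8 3 (pd8 3 (pd8 3 F)) x) :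
    ∀ x ∈ U, (x 3 ^ 3 + 27 * x 0 * x 1 * x 2) * pd8 3 (pd8 3 F) x
      + 3 * x 3 ^ 2 * pd8 3 F x + x 3 * F x = 0 := by
  have hUo : IsOpen U := by
    rw [hU]
    have hc : Continuous (fun x : Fin 4 → ℝ => x 3 ^ 3 + 27 * x 0 * x 1 * x 2) := by
      continuity
    exact isOpen_compl_singleton.preimage hc
  have s0 : ∀ i : Fin 4, ContDiffOn ℝ (⊤ : ℕ∞) (pd8 i F) U := fun i => pd8_contDiffOn hUo hF i
  have s1 : ∀ i j : Fin 4, ContDiffOn ℝ (⊤ : ℕ∞) (pd8 i (pd8 j F)) U :=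
    fun i j => pd8_contDiffOn hUo (s0 j) i
  have sy : ∀ a b : Fin 4, ∀ y ∈ U, pd8 a (pd8 b F) y = pd8 b (pd8 a F) y :=
    fun a b y hy => pd8_symm hUo hF hy a b
  -- first-order Euler relations differentiated in direction 3
  have D1 : ∀ x ∈ U, x 3 * pd8 3 (pd8 3 F) x + 3 * x 0 * pd8 0 (pd8 3 F) x
      + 2 * pd8 3 F x = 0 := by
    intro x hx
    have h := pd8_rel_step hUo 0 (s0 3) (s0 0) hF h1 3 x hx
    simp only [Fin.reduceEq, reduceIte] at h
    linear_combination h - 3 * x 0 * (sy 3 0 x hx)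
  have D2 : ∀ x ∈ U, x 3 * pd8 3 (pd8 3 F) x + 3 * x 1 * pd8 1 (pd8 3 F) x
      + 2 * pd8 3 F x = 0 := by
    intro x hx
    have h := pd8_rel_step hUo 1 (s0 3) (s0 1) hF h2 3 x hx
    simp only [Fin.reduceEq, reduceIte] at h
    linear_combination h - 3 * x 1 * (sy 3 1 x hx)
  have D3 : ∀ x ∈ U, x 3 * pd8 3 (pd8 3 F) x + 3 * x 2 * pd8 2 (pd8 3 F) x
      + 2 * pd8 3 F x = 0 := by
    intro x hx
    have h := pd8_rel_step hUo 2 (s0 3) (s0 2) hF h3 3 x hx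
    simp only [Fin.reduceEq, reduceIte] at h
    linear_combination h - 3 * x 2 * (sy 3 2 x hx)
  -- second derivatives in direction 3
  have DD1 : ∀ x ∈ U, x 3 * pd8 3 (pd8 3 (pd8 3 F)) x
      + 3 * x 0 * pd8 0 (pd8 3 (pd8 3 F)) x + 3 * pd8 3 (pd8 3 F) x = 0 := by
    intro x hx
    have h := pd8_rel_step hUo 0 (s1 3 3) (s1 0 3)
      (contDiffOn_const.mul (s0 3)) D1 3 x hx
    rw [pd8_const_mul 3 2 (pd8_diffAt hUo (s0 3) hx)] at h
    simp only [Fin.reduceEq, reduceIte] at h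
    linear_combination h - 3 * x 0 * (pd8_symm hUo (s0 3) hx 3 0)
  have DD2 : ∀ x ∈ U, x 3 * pd8 3 (pd8 3 (pd8 3 F)) x
      + 3 * x 1 * pd8 1 (pd8 3 (pd8 3 F)) x + 3 * pd8 3 (pd8 3 F) x = 0 := by
    intro x hx
    have h := pd8_rel_step hUo 1 (s1 3 3) (s1 1 3)
      (contDiffOn_const.mul (s0 3)) D2 3 x hx
    rw [pd8_const_mul 3 2 (pd8_diffAt hUo (s0 3) hx)] at h
    simp only [Fin.reduceEq, reduceIte] at h
    linear_combination h - 3 * x 1 * (pd8_symm hUo (s0 3) hx 3 1)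
  have DD3 : ∀ x ∈ U, x 3 * pd8 3 (pd8 3 (pd8 3 F)) x
      + 3 * x 2 * pd8 2 (pd8 3 (pd8 3 F)) x + 3 * pd8 3 (pd8 3 F) x = 0 := by
    intro x hx
    have h := pd8_rel_step hUo 2 (s1 3 3) (s1 2 3)
      (contDiffOn_const.mul (s0 3)) D3 3 x hx
    rw [pd8_const_mul 3 2 (pd8_diffAt hUo (s0 3) hx)] at h
    simp only [Fin.reduceEq, reduceIte] at h
    linear_combination h - 3 * x 2 * (pd8_symm hUo (s0 3) hx 3 2)
  -- mixed derivatives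
  have F22 : ∀ x ∈ U, x 3 * pd8 2 (pd8 3 F) x + 3 * x 1 * pd8 1 (pd8 2 F) x
      + pd8 2 F x = 0 := by
    intro x hx
    have h := pd8_rel_step hUo 1 (s0 3) (s0 1) hF h2 2 x hx
    simp only [Fin.reduceEq, reduceIte] at h
    linear_combination h - 3 * x 1 * (sy 2 1 x hx)
  have G22 : ∀ x ∈ U, x 3 * pd8 2 (pd8 3 (pd8 3 F)) x
      + 3 * x 1 * pd8 1 (pd8 2 (pd8 3 F)) x + 2 * pd8 2 (pd8 3 F) x = 0 := by
    intro x hx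
    have h := pd8_rel_step hUo 1 (s1 2 3) (s1 1 2) (s0 2) F22 3 x hx
    simp only [Fin.reduceEq, reduceIte] at h
    have c1 : pd8 3 (pd8 2 (pd8 3 F)) x = pd8 2 (pd8 3 (pd8 3 F)) x :=
      pd8_symm hUo (s0 3) hx 3 2
    have c2 : pd8 3 (pd8 1 (pd8 2 F)) x = pd8 1 (pd8 2 (pd8 3 F)) x :=
      (pd8_symm hUo (s0 2) hx 3 1).trans (pd8_congr hUo (sy 3 2) hx 1)
    have c3 : pd8 3 (pd8 2 F) x = pd8 2 (pd8 3 F) x := sy 3 2 x hx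
    linear_combination h - x 3 * c1 - 3 * x 1 * c2 - c3
  have F12 : ∀ x ∈ U, x 3 * pd8 2 (pd8 3 F) x + 3 * x 0 * pd8 2 (pd8 0 F) x
      + pd8 2 F x = 0 := by
    intro x hx
    have h := pd8_rel_step hUo 0 (s0 3) (s0 0) hF h1 2 x hx
    simp only [Fin.reduceEq, reduceIte] at h
    linear_combination h
  have G12 : ∀ x ∈ U, x 3 * pd8 1 (pd8 2 (pd8 3 F)) x
      + 3 * x 0 * pd8 0 (pd8 1 (pd8 2 F)) x + pd8 1 (pd8 2 F) x = 0 := by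
    intro x hx
    have h := pd8_rel_step hUo 0 (s1 2 3) (s1 2 0) (s0 2) F12 1 x hx
    simp only [Fin.reduceEq, reduceIte] at h
    have c4 : pd8 1 (pd8 2 (pd8 0 F)) x = pd8 0 (pd8 1 (pd8 2 F)) x :=
      (pd8_congr hUo (sy 2 0) hx 1).trans (pd8_symm hUo (s0 2) hx 1 0)
    linear_combination h - 3 * x 0 * c4
  -- the third-order identity
  have key3 : ∀ x ∈ U, (x 3 * (x 3 * x 3) + 27 * x 0 * (x 1 * x 2))
      * pd8 3 (pd8 3 (pd8 3 F)) x + 6 * (x 3 * x 3) * pd8 3 (pd8 3 F) x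
      + 7 * x 3 * pd8 3 F x + F x = 0 := by
    intro x hx
    linear_combination (x 3 * x 3) * (DD3 x hx) + 3 * x 3 * (D3 x hx) + h3 x hx
      + 9 * (x 1 * x 2) * (G12 x hx) - 3 * x 2 * x 3 * (G22 x hx)
      - 3 * x 2 * (F22 x hx) - 27 * x 0 * (x 1 * x 2) * (h4 x hx)
  -- the goal combination
  set Gf : X4 → ℝ := fun y => (y 3 * (y 3 * y 3) + 27 * y 0 * (y 1 * y 2))
      * pd8 3 (pd8 3 F) y + 3 * (y 3 * y 3) * pd8 3 F y + y 3 * F y with hGf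
  have c3p : ContDiff ℝ (⊤ : ℕ∞) (fun y : X4 => y 3) :=
    (ContinuousLinearMap.proj (R := ℝ) (φ := fun _ : Fin 4 => ℝ) 3).contDiff
  have c0p : ContDiff ℝ (⊤ : ℕ∞) (fun y : X4 => y 0) :=
    (ContinuousLinearMap.proj (R := ℝ) (φ := fun _ : Fin 4 => ℝ) 0).contDiff
  have c1p : ContDiff ℝ (⊤ : ℕ∞) (fun y : X4 => y 1) :=
    (ContinuousLinearMap.proj (R := ℝ) (φ := fun _ : Fin 4 => ℝ) 1).contDiff
  have c2p : ContDiff ℝ (⊤ : ℕ∞) (fun y : X4 => y 2) :=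
    (ContinuousLinearMap.proj (R := ℝ) (φ := fun _ : Fin 4 => ℝ) 2).contDiff
  have sG : ContDiffOn ℝ (⊤ : ℕ∞) Gf U := by
    rw [hGf]
    exact ((((c3p.mul (c3p.mul c3p)).add ((contDiff_const.mul c0p).mul
        (c1p.mul c2p))).contDiffOn.mul (s1 3 3)).add
      ((contDiff_const.mul (c3p.mul c3p)).contDiffOn.mul (s0 3))).add
      (c3p.contDiffOn.mul hF)
  -- expansions of the partial derivatives of Gf
  have hexp : ∀ (m : Fin 4), ∀ x ∈ U, pd8 m Gf x
      = (3 * (x 3 * x 3) * (if (3:Fin 4) = m then 1 else 0)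
          + 27 * ((if (0:Fin 4) = m then 1 else 0) * (x 1 * x 2)
            + x 0 * (x 1 * (if (2:Fin 4) = m then 1 else 0)
              + x 2 * (if (1:Fin 4) = m then 1 else 0)))) * pd8 3 (pd8 3 F) x
        + (x 3 * (x 3 * x 3) + 27 * x 0 * (x 1 * x 2)) * pd8 m (pd8 3 (pd8 3 F)) x
        + 6 * x 3 * (if (3:Fin 4) = m then 1 else 0) * pd8 3 F x
        + 3 * (x 3 * x 3) * pd8 m (pd8 3 F) x
        + (if (3:Fin 4) = m then 1 else 0) * F x + x 3 * pd8 m F x := by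
    intro m x hx
    exact pd8_G_expand hUo (s1 3 3) (s0 3) hF m hx
  -- the derivative of Gf in direction 3 vanishes on U
  have hG3 : ∀ x ∈ U, pd8 3 Gf x = 0 := by
    intro x hx
    have h := hexp 3 x hx
    simp only [Fin.reduceEq, reduceIte] at h
    rw [h]
    linear_combination key3 x hx
  -- Euler invariance of Gf in directions 0, 1, 2
  have hz0 : ∀ x ∈ U, x 0 * pd8 0 Gf x = 0 := by
    intro x hx
    have h0 := hexp 0 x hx
    simp only [Fin.reduceEq, reduceIte] at h0
    have hcomb : x 3 * pd8 3 Gf x + 3 * x 0 * pd8 0 Gf x = 0 := by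
      rw [h0, hG3 x hx]
      linear_combination (x 3 * (x 3 * x 3) + 27 * x 0 * (x 1 * x 2)) * (DD1 x hx)
        + 3 * (x 3 * x 3) * (D1 x hx) + x 3 * (h1 x hx) - x 3 * (key3 x hx)
    have := hG3 x hx
    linear_combination hcomb / 3 - x 3 / 3 * this
  have hz1 : ∀ x ∈ U, x 1 * pd8 1 Gf x = 0 := by
    intro x hx
    have h0 := hexp 1 x hx
    simp only [Fin.reduceEq, reduceIte] at h0
    have hcomb : x 3 * pd8 3 Gf x + 3 * x 1 * pd8 1 Gf x = 0 := by
      rw [h0, hG3 x hx]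
      linear_combination (x 3 * (x 3 * x 3) + 27 * x 0 * (x 1 * x 2)) * (DD2 x hx)
        + 3 * (x 3 * x 3) * (D2 x hx) + x 3 * (h2 x hx) - x 3 * (key3 x hx)
    have := hG3 x hx
    linear_combination hcomb / 3 - x 3 / 3 * this
  have hz2 : ∀ x ∈ U, x 2 * pd8 2 Gf x = 0 := by
    intro x hx
    have h0 := hexp 2 x hx
    simp only [Fin.reduceEq, reduceIte] at h0
    have hcomb : x 3 * pd8 3 Gf x + 3 * x 2 * pd8 2 Gf x = 0 := by
      rw [h0, hG3 x hx]
      linear_combination (x 3 * (x 3 * x 3) + 27 * x 0 * (x 1 * x 2)) * (DD3 x hx)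
        + 3 * (x 3 * x 3) * (D3 x hx) + x 3 * (h3 x hx) - x 3 * (key3 x hx)
    have := hG3 x hx
    linear_combination hcomb / 3 - x 3 / 3 * this
  -- by continuity, the partial derivatives of Gf vanish on all of U
  have contG : ∀ i : Fin 4, ContinuousOn (pd8 i Gf) U :=
    fun i => (pd8_contDiffOn hUo sG i).continuousOn
  have dens : ∀ i : Fin 4, (∀ x ∈ U, x i * pd8 i Gf x = 0) →
      ∀ x ∈ U, pd8 i Gf x = 0 := by
    intro i hz x hx
    rcases eq_or_ne (x i) 0 with hxi | hxi
    · -- limit argument along the line x + t • eᵢ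
      set γ : ℝ → X4 := fun t => x + t • (Pi.single i 1 : X4) with hγ
      have hγc : Continuous γ := by
        apply continuous_const.add
        exact continuous_id.smul continuous_const
      have hγ0 : γ 0 = x := by simp [hγ]
      have hmem : ∀ᶠ t in nhds (0:ℝ), γ t ∈ U := by
        have hU0 : U ∈ nhds (γ 0) := hUo.mem_nhds (by rwa [hγ0])
        exact hγc.continuousAt.eventually_mem hU0
      have hγi : ∀ t : ℝ, γ t i = t := by
        intro t
        simp [hγ, Pi.single_eq_same, hxi]
      have h1' : Filter.Tendsto γ (nhdsWithin (0:ℝ) {0}ᶜ) (nhdsWithin x U) := by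
        rw [tendsto_nhdsWithin_iff]
        constructor
        · have h2 := hγc.tendsto 0
          rw [hγ0] at h2
          exact h2.mono_left nhdsWithin_le_nhds
        · exact hmem.filter_mono nhdsWithin_le_nhds
      have htt : Filter.Tendsto (fun t => pd8 i Gf (γ t)) (nhdsWithin (0:ℝ) {0}ᶜ)
          (nhds (pd8 i Gf x)) := (contG i x hx).tendsto.comp h1'
      have hev : (fun t => pd8 i Gf (γ t)) =ᶠ[nhdsWithin (0:ℝ) {0}ᶜ] fun _ => 0 := by
        filter_upwards [self_mem_nhdsWithin, hmem.filter_mono nhdsWithin_le_nhds] with t ht hmt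
        have hzz := hz (γ t) hmt
        rw [hγi t] at hzz
        exact (mul_eq_zero.1 hzz).resolve_left ht
      exact tendsto_nhds_unique (htt.congr' hev) tendsto_const_nhds
    · exact (mul_eq_zero.1 (hz x hx)).resolve_left hxi
  have hpd : ∀ i : Fin 4, ∀ x ∈ U, pd8 i Gf x = 0 := by
    intro i
    fin_cases i
    · exact dens 0 hz0
    · exact dens 1 hz1
    · exact dens 2 hz2
    · exact hG3
  -- the full derivative of Gf vanishes on U
  have hfd : ∀ x ∈ U, fderiv ℝ Gf x = 0 := by
    intro x hx
    ext v
    have hv : v = ∑ j : Fin 4, v j • (Pi.single j 1 : X4) := by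
      funext k
      simp [Finset.sum_apply, Pi.single_apply]
    rw [hv, map_sum]
    simp only [map_smul]
    have hj : ∀ j : Fin 4, fderiv ℝ Gf x (Pi.single j 1) = 0 := fun j => hpd j x hx
    simp [hj]
  -- Gf is constant along segments contained in U
  have seg0 : ∀ a b : X4, (∀ z ∈ segment ℝ a b, z ∈ U) → Gf a = Gf b := by
    intro a b hseg
    have hd : ∀ z ∈ segment ℝ a b,
        HasFDerivWithinAt Gf ((fun _ : X4 => (0 : X4 →L[ℝ] ℝ)) z) (segment ℝ a b) z := by
      intro z hz
      have h1' : HasFDerivAt Gf (fderiv ℝ Gf z) z :=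
        (pd8_diffAt hUo sG (hseg z hz)).hasFDerivAt
      rw [hfd z (hseg z hz)] at h1'
      exact h1'.hasFDerivWithinAt
    have hb := (convex_segment a b).norm_image_sub_le_of_norm_hasFDerivWithin_le (C := 0) hd
      (fun z _ => by simp) (left_mem_segment ℝ a b) (right_mem_segment ℝ a b)
    simp only [zero_mul, norm_le_zero_iff, sub_eq_zero] at hb
    exact hb.symm
  -- value of Gf on the x₄-axis
  have hax : ∀ T : ℝ, T ≠ 0 →
      (Pi.single (3:Fin 4) T : X4) ∈ U ∧ Gf (Pi.single (3:Fin 4) T : X4) = 0 := by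
    intro T hT
    set y : X4 := (Pi.single (3:Fin 4) T : X4) with hy
    have hy3 : y 3 = T := by rw [hy]; simp [Pi.single_apply]
    have hy0 : y 0 = 0 := by rw [hy]; simp [Pi.single_apply]
    have hy1 : y 1 = 0 := by rw [hy]; simp [Pi.single_apply]
    have hy2 : y 2 = 0 := by rw [hy]; simp [Pi.single_apply]
    have hyU : y ∈ U := by
      rw [hU]
      show y 3 ^ 3 + 27 * y 0 * y 1 * y 2 ≠ 0
      rw [hy3, hy0]
      simpa using pow_ne_zero 3 hT
    refine ⟨hyU, ?_⟩
    have e1 := h1 y hyU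
    have d1' := D1 y hyU
    rw [hy3, hy0] at e1 d1'
    have hGy : Gf y = (y 3 * (y 3 * y 3) + 27 * y 0 * (y 1 * y 2))
        * pd8 3 (pd8 3 F) y + 3 * (y 3 * y 3) * pd8 3 F y + y 3 * F y := rfl
    rw [hGy, hy3, hy0, hy1, hy2]
    linear_combination (T * T) * d1' + T * e1
  have hGzero : ∀ x ∈ U, Gf x = 0 :=
    pd8_connect U hU Gf seg0 (fun T hT => (hax T hT).2)
  intro x hx
  have h := hGzero x hx
  have h2 : (x 3 * (x 3 * x 3) + 27 * x 0 * (x 1 * x 2)) * pd8 3 (pd8 3 F) x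
      + 3 * (x 3 * x 3) * pd8 3 F x + x 3 * F x = 0 := h
  linear_combination h2
end

section
/- In the quotient ring R = ℤ[c₁,c₂,c₃,c₄]/J, where J = ⟨c₁+c₂+c₃+c₄, c₁-c₃, c₂-c₃, c₁c₂c₃⟩, the quotient R/Ann_R(c₄) is a free ℤ-module of rank 2, where Ann_R(c₄) = {r ∈ R : r·c₄ = 0}. -/
/-!
Modulo `J` we have `c₁ = c₂ = c₃ = t`, `c₄ = -3t` and `t³ = 0`, so `R` is a quotient of
`ℤ[t]/(t³)`; the assignment `t ↦ x` to `ℤ[x]/(x³)` shows it is no smaller. Since `ℤ[x]/(x³)`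
has no `ℤ`-torsion, `q(x) · 3x = 0` forces `x² ∣ q`, so `Ann(c₄) = (t²)` and
`R/Ann(c₄) ≅ ℤ[x]/(x²)`, which has the `ℤ`-basis `1, x`.
-/

open MvPolynomial

/-- Stienstra's ideal `J = ⟨c₁+c₂+c₃+c₄, c₁-c₃, c₂-c₃, c₁c₂c₃⟩` in `ℤ[c₁,c₂,c₃,c₄]`. -/
noncomputable def stienstraJ : Ideal (MvPolynomial (Fin 4) ℤ) :=
  Ideal.span {X 0 + X 1 + X 2 + X 3, X 0 - X 2, X 1 - X 2, X 0 * X 1 * X 2}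

/-- The ring `R = ℤ[c₁,c₂,c₃,c₄]/J`. -/
noncomputable abbrev stienstraR := MvPolynomial (Fin 4) ℤ ⧸ stienstraJ

/-- The annihilator ideal of the class of `c₄` in `R`. -/
noncomputable def annC4 : Ideal stienstraR :=
  { carrier := {r : stienstraR | r * Ideal.Quotient.mk stienstraJ (X 3) = 0}
    add_mem' := by intro a b ha hb; simp only [Set.mem_setOf_eq] at *; rw [add_mul, ha, hb, add_zero]
    zero_mem' := by simp
    smul_mem' := by
      intro c a ha; simp only [Set.mem_setOf_eq, smul_eq_mul] at *
      rw [mul_assoc, ha, mul_zero] }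

section TruncatedPolynomial

open Polynomial (X_pow_dvd_iff monic_X_pow natDegree_X_pow)

variable {A : Type*} [CommRing A]

theorem AdjoinRoot.mk_mul_of_mul_root_eq_zero_iff {n : ℕ} {a : A} (ha : a ∈ nonZeroDivisors A)
    (q : Polynomial A) :
    AdjoinRoot.mk (Polynomial.X ^ (n + 1)) q * (AdjoinRoot.of _ a * AdjoinRoot.root _) = 0 ↔
      Polynomial.X ^ n ∣ q := by
  rw [← AdjoinRoot.mk_C, ← AdjoinRoot.mk_X, ← map_mul, ← map_mul, AdjoinRoot.mk_eq_zero,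
    show q * (Polynomial.C a * Polynomial.X) = Polynomial.X * (Polynomial.C a * q) by ring,
    X_pow_dvd_iff, X_pow_dvd_iff, Nat.forall_lt_succ_left]
  simp [Polynomial.coeff_X_mul, Polynomial.coeff_C_mul, mul_left_mem_nonZeroDivisors_eq_zero_iff ha]

theorem AdjoinRoot.root_X_pow_pow (n : ℕ) :
    AdjoinRoot.root (Polynomial.X ^ n : Polynomial A) ^ n = 0 := by
  rw [← AdjoinRoot.mk_X, ← map_pow, AdjoinRoot.mk_self]

variable (A) in
noncomputable def AdjoinRoot.basisXPow [Nontrivial A] (n : ℕ) :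
    Module.Basis (Fin n) A (AdjoinRoot (Polynomial.X ^ n : Polynomial A)) :=
  (AdjoinRoot.powerBasis' (monic_X_pow n)).basis.reindex (finCongr (natDegree_X_pow n))

end TruncatedPolynomial

namespace Stienstra

noncomputable abbrev c (i : Fin 4) : stienstraR := Ideal.Quotient.mk stienstraJ (X i)

theorem mem_annC4 {r : stienstraR} : r ∈ annC4 ↔ r * c 3 = 0 := Iff.rfl

theorem generators_eq_zero :
    c 0 + c 1 + c 2 + c 3 = 0 ∧ c 0 - c 2 = 0 ∧ c 1 - c 2 = 0 ∧ c 0 * c 1 * c 2 = 0 := by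
  have h (g) (hg : g ∈ ({X 0 + X 1 + X 2 + X 3, X 0 - X 2, X 1 - X 2, X 0 * X 1 * X 2} :
      Set (MvPolynomial (Fin 4) ℤ))) : Ideal.Quotient.mk stienstraJ g = 0 :=
    Ideal.Quotient.eq_zero_iff_mem.mpr (Ideal.subset_span hg)
  refine ⟨?_, ?_, ?_, ?_⟩
  · simp only [c, ← map_add]; exact h _ (by simp)
  · simp only [c, ← map_sub]; exact h _ (by simp)
  · simp only [c, ← map_sub]; exact h _ (by simp)
  · simp only [c, ← map_mul]; exact h _ (by simp)

theorem c_one : c 1 = c 0 := by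
  obtain ⟨-, h02, h12, -⟩ := generators_eq_zero
  linear_combination h12 - h02

theorem c_two : c 2 = c 0 := by
  obtain ⟨-, h02, -, -⟩ := generators_eq_zero
  linear_combination -h02

theorem c_three : c 3 = -3 * c 0 := by
  obtain ⟨hsum, h02, h12, -⟩ := generators_eq_zero
  linear_combination hsum + 2 * h02 - h12

theorem c_zero_pow_three : c 0 ^ 3 = 0 := by
  obtain ⟨-, h02, h12, hprod⟩ := generators_eq_zero
  linear_combination hprod + c 0 * c 2 * (h02 - h12) + c 0 ^ 2 * h02

theorem c_zero_sq_mem_annC4 : c 0 ^ 2 ∈ annC4 := by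
  rw [mem_annC4, c_three]
  linear_combination -3 * c_zero_pow_three

noncomputable def rootVec (n : ℕ) : Fin 4 → AdjoinRoot (Polynomial.X ^ n : Polynomial ℤ) :=
  ![AdjoinRoot.root _, AdjoinRoot.root _, AdjoinRoot.root _, -3 * AdjoinRoot.root _]

noncomputable def toTrunc3 : stienstraR →ₐ[ℤ] AdjoinRoot (Polynomial.X ^ 3 : Polynomial ℤ) :=
  Ideal.Quotient.liftₐ stienstraJ (aeval (rootVec 3)) fun p hp => by
    refine (Ideal.span_le (I := RingHom.ker (aeval (rootVec 3)))).mpr ?_ hp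
    simp only [Set.insert_subset_iff, Set.singleton_subset_iff, SetLike.mem_coe, RingHom.mem_ker,
      rootVec, map_add, map_sub, map_mul, aeval_X, Matrix.cons_val_zero,
      Matrix.cons_val_one, Matrix.cons_val, sub_self, ← pow_three', AdjoinRoot.root_X_pow_pow,
      and_self, and_true]
    ring

theorem toTrunc3_c_zero : toTrunc3 (c 0) = AdjoinRoot.root _ := by
  change aeval (rootVec 3) (X 0 : MvPolynomial (Fin 4) ℤ) = _
  simp [rootVec]

theorem toTrunc3_c_three : toTrunc3 (c 3) = -3 * AdjoinRoot.root _ := by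
  change aeval (rootVec 3) (X 3 : MvPolynomial (Fin 4) ℤ) = _
  simp [rootVec]

noncomputable def ofTrunc2 : AdjoinRoot (Polynomial.X ^ 2 : Polynomial ℤ) →ₐ[ℤ] stienstraR ⧸ annC4 :=
  AdjoinRoot.liftAlgHom _ (Algebra.ofId ℤ _) (Ideal.Quotient.mk annC4 (c 0)) <| by
    simpa [← map_pow, Ideal.Quotient.eq_zero_iff_mem] using c_zero_sq_mem_annC4

theorem ofTrunc2_comp_aeval :
    ofTrunc2.comp (aeval (rootVec 2)) =
      (Ideal.Quotient.mkₐ ℤ annC4).comp (Ideal.Quotient.mkₐ ℤ stienstraJ) := by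
  refine MvPolynomial.algHom_ext fun i => ?_
  fin_cases i <;> simp [rootVec, ofTrunc2, c_one, c_two, c_three, map_ofNat]
  ring

theorem ofTrunc2_surjective : Function.Surjective ofTrunc2 := by
  have h : Function.Surjective (ofTrunc2.comp (aeval (rootVec 2))) := by
    rw [ofTrunc2_comp_aeval]
    exact Ideal.Quotient.mk_surjective.comp Ideal.Quotient.mk_surjective
  rw [AlgHom.coe_comp] at h
  exact h.of_comp

theorem ofTrunc2_injective : Function.Injective ofTrunc2 := by
  refine (injective_iff_map_eq_zero _).mpr fun y hy => ?_
  induction y using AdjoinRoot.induction_on with | ih q => ?_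
  have hann : Polynomial.aeval (c 0) q ∈ annC4 := by
    rw [← Ideal.Quotient.eq_zero_iff_mem, ← Ideal.Quotient.mkₐ_eq_mk ℤ,
      ← Polynomial.aeval_algHom_apply]
    simpa [ofTrunc2, ← Polynomial.aeval_def] using hy
  have hq := congrArg toTrunc3 (mem_annC4.mp hann)
  rw [map_mul, ← Polynomial.aeval_algHom_apply, toTrunc3_c_zero, toTrunc3_c_three,
    AdjoinRoot.aeval_eq, map_zero, show (-3 : AdjoinRoot _) = AdjoinRoot.of _ (-3) by simp,
    AdjoinRoot.mk_mul_of_mul_root_eq_zero_iff (mem_nonZeroDivisors_of_ne_zero (by norm_num))] at hq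
  exact AdjoinRoot.mk_eq_zero.mpr hq

end Stienstra

/-- `R/Ann_R(c₄)` is a free `ℤ`-module of rank `2`. -/
theorem stmt_13 : Nonempty (Module.Basis (Fin 2) ℤ (stienstraR ⧸ annC4)) :=
  ⟨(AdjoinRoot.basisXPow ℤ 2).map (AlgEquiv.ofBijective Stienstra.ofTrunc2
    ⟨Stienstra.ofTrunc2_injective, Stienstra.ofTrunc2_surjective⟩).toLinearEquiv⟩
end
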